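/- Let p be an odd prime, let ℓ ≥ 2 be an integer, and let a ∈ ℤ. If p^{ℓ−1} does not divide a(a−4), then T_a(p^ℓ) = 0. -/

import Mathlib

/-- `e_m(t) := exp(2πit/m)`. -/
noncomputable def eC (m : ℕ) (t : ℤ) : ℂ :=
  Complex.exp (2 * Real.pi * Complex.I * (t : ℂ) / (m : ℂ))

/-- The Markoff polynomial `M(x,y,z) = x² + y² + z² - xyz`. -/
def Mk (x y z : ℤ) : ℤ := x ^ 2 + y ^ 2 + z ^ 2 - x * y * z

/-- `T_a(m) := ∑_{1≤u≤m, gcd(u,m)=1} ∑_{1≤x,y,z≤m} e_m(u(M(x,y,z) - a))`. -/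
noncomputable def T (a : ℤ) (m : ℕ) : ℂ :=
  ∑ u ∈ (Finset.Icc 1 m).filter fun u => Nat.Coprime u m,
    ∑ x ∈ Finset.Icc (1 : ℤ) (m : ℤ), ∑ y ∈ Finset.Icc (1 : ℤ) (m : ℤ),
      ∑ z ∈ Finset.Icc (1 : ℤ) (m : ℤ), eC m ((u : ℤ) * (Mk x y z - a))

open Finset

/-- In `[0,p)` there is exactly one solution of `g*t ≡ c (mod p)` when `p ∤ g`. -/
lemma lin_count (p : ℕ) (hp : p.Prime) (g c : ℤ) (hg : ¬ (p:ℤ) ∣ g) :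
    ((Ico (0:ℤ) p).filter fun t => (p:ℤ) ∣ g*t - c).card = 1 := by
  haveI : Fact p.Prime := ⟨hp⟩
  have hg' : (g : ZMod p) ≠ 0 := by
    simpa [ZMod.intCast_zmod_eq_zero_iff_dvd] using hg
  have key : ((Ico (0:ℤ) p).filter fun t => (p:ℤ) ∣ g*t - c).card
      = (Finset.univ.filter fun r : ZMod p => (g:ZMod p) * r = (c:ZMod p)).card := by
    refine Finset.card_nbij (i := fun t => ((t : ZMod p))) ?_ ?_ ?_
    · intro t ht
      simp only [Finset.mem_coe, Finset.mem_filter, Finset.mem_Ico] at ht ⊢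
      refine ⟨Finset.mem_univ _, ?_⟩
      have := (ZMod.intCast_zmod_eq_zero_iff_dvd (g*t - c) p).mpr ht.2
      push_cast at this
      linear_combination this
    · intro t ht t' ht'
      simp only [Finset.coe_filter, Set.mem_setOf_eq, Finset.mem_Ico] at ht ht'
      intro hcast
      have hdvd : (p:ℤ) ∣ t - t' := by
        rwa [← ZMod.intCast_zmod_eq_zero_iff_dvd, Int.cast_sub, sub_eq_zero]
      have : t - t' = 0 := by
        apply Int.eq_zero_of_dvd_of_natAbs_lt_natAbs hdvd
        have hp0 : (0:ℤ) < p := by exact_mod_cast hp.pos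
        omega
      omega
    · intro r hr
      refine ⟨(ZMod.val r : ℤ), ?_, ?_⟩
      · simp only [Finset.coe_filter, Set.mem_setOf_eq, Finset.mem_Ico]
        simp only [Finset.mem_coe, Finset.mem_filter, Finset.mem_univ, true_and] at hr
        constructor
        · constructor
          · positivity
          · exact_mod_cast ZMod.val_lt r
        · rw [← ZMod.intCast_zmod_eq_zero_iff_dvd]
          push_cast
          simp only [ZMod.natCast_val, ZMod.cast_id]
          rw [hr]; ring
      · push_cast
        simp only [ZMod.natCast_val, ZMod.cast_id]
  rw [key]
  have : (Finset.univ.filter fun r : ZMod p => (g:ZMod p) * r = (c:ZMod p))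
      = {(g:ZMod p)⁻¹ * c} := by
    ext r
    simp only [Finset.mem_filter, Finset.mem_univ, true_and, Finset.mem_singleton]
    constructor
    · intro h; field_simp [hg']; linear_combination h
    · rintro rfl; field_simp
  rw [this, Finset.card_singleton]


lemma card_Ico_p (p : ℕ) : (Ico (0:ℤ) p).card = p := by
  rw [Int.card_Ico]; simp

lemma lin_count3 (p : ℕ) (hp : p.Prime) (g₁ g₂ g₃ w : ℤ)
    (h : ¬((p:ℤ) ∣ g₁ ∧ (p:ℤ) ∣ g₂ ∧ (p:ℤ) ∣ g₃)) :
    ∑ x ∈ Ico (0:ℤ) p, ∑ y ∈ Ico (0:ℤ) p, ∑ z ∈ Ico (0:ℤ) p,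
      (if (p:ℤ) ∣ g₁*x + g₂*y + g₃*z - w then 1 else 0 : ℕ) = p^2 := by
  have single : ∀ (g c : ℤ), ¬(p:ℤ) ∣ g →
      ∑ t ∈ Ico (0:ℤ) p, (if (p:ℤ) ∣ g*t - c then 1 else 0 : ℕ) = 1 := by
    intro g c hg
    rw [← Finset.card_filter]
    exact lin_count p hp g c hg
  by_cases h1 : (p:ℤ) ∣ g₁
  · by_cases h2 : (p:ℤ) ∣ g₂
    · -- then ¬ p ∣ g₃
      have h3 : ¬ (p:ℤ) ∣ g₃ := fun h3 => h ⟨h1, h2, h3⟩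
      have : ∀ x y z : ℤ, g₁*x + g₂*y + g₃*z - w = g₃*z - (w - g₁*x - g₂*y) := by
        intros; ring
      simp_rw [this]
      calc ∑ x ∈ Ico (0:ℤ) p, ∑ y ∈ Ico (0:ℤ) p, ∑ z ∈ Ico (0:ℤ) p,
            (if (p:ℤ) ∣ g₃*z - (w - g₁*x - g₂*y) then 1 else 0 : ℕ)
          = ∑ x ∈ Ico (0:ℤ) p, ∑ y ∈ Ico (0:ℤ) p, 1 := by
            apply Finset.sum_congr rfl; intro x _
            apply Finset.sum_congr rfl; intro y _
            exact single g₃ _ h3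
        _ = p^2 := by simp [card_Ico_p]; ring
    · -- ¬ p ∣ g₂ : sum over y innermost
      have : ∀ x y z : ℤ, g₁*x + g₂*y + g₃*z - w = g₂*y - (w - g₁*x - g₃*z) := by
        intros; ring
      simp_rw [this]
      calc ∑ x ∈ Ico (0:ℤ) p, ∑ y ∈ Ico (0:ℤ) p, ∑ z ∈ Ico (0:ℤ) p,
            (if (p:ℤ) ∣ g₂*y - (w - g₁*x - g₃*z) then 1 else 0 : ℕ)
          = ∑ x ∈ Ico (0:ℤ) p, ∑ z ∈ Ico (0:ℤ) p, ∑ y ∈ Ico (0:ℤ) p,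
            (if (p:ℤ) ∣ g₂*y - (w - g₁*x - g₃*z) then 1 else 0 : ℕ) := by
            apply Finset.sum_congr rfl; intro x _
            exact Finset.sum_comm
        _ = ∑ x ∈ Ico (0:ℤ) p, ∑ z ∈ Ico (0:ℤ) p, 1 := by
            apply Finset.sum_congr rfl; intro x _
            apply Finset.sum_congr rfl; intro z _
            exact single g₂ _ h2
        _ = p^2 := by simp [card_Ico_p]; ring
  · -- sum over x innermost
    have : ∀ x y z : ℤ, g₁*x + g₂*y + g₃*z - w = g₁*x - (w - g₂*y - g₃*z) := by
      intros; ring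
    simp_rw [this]
    calc ∑ x ∈ Ico (0:ℤ) p, ∑ y ∈ Ico (0:ℤ) p, ∑ z ∈ Ico (0:ℤ) p,
          (if (p:ℤ) ∣ g₁*x - (w - g₂*y - g₃*z) then 1 else 0 : ℕ)
        = ∑ y ∈ Ico (0:ℤ) p, ∑ x ∈ Ico (0:ℤ) p, ∑ z ∈ Ico (0:ℤ) p,
          (if (p:ℤ) ∣ g₁*x - (w - g₂*y - g₃*z) then 1 else 0 : ℕ) := Finset.sum_comm
      _ = ∑ y ∈ Ico (0:ℤ) p, ∑ z ∈ Ico (0:ℤ) p, ∑ x ∈ Ico (0:ℤ) p,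
          (if (p:ℤ) ∣ g₁*x - (w - g₂*y - g₃*z) then 1 else 0 : ℕ) := by
          apply Finset.sum_congr rfl; intro y _
          exact Finset.sum_comm
      _ = ∑ y ∈ Ico (0:ℤ) p, ∑ z ∈ Ico (0:ℤ) p, 1 := by
          apply Finset.sum_congr rfl; intro y _
          apply Finset.sum_congr rfl; intro z _
          exact single g₁ _ h1
      _ = p^2 := by simp [card_Ico_p]; ring

section
variable {M : Type*} [AddCommMonoid M]

lemma sum_Ico_split (q : ℤ) (hq : 0 ≤ q) (n : ℕ) (h : ℤ → M) :
    ∑ x ∈ Ico (0:ℤ) (q * n), h x = ∑ t ∈ range n, ∑ x ∈ Ico (0:ℤ) q, h (x + q * t) := by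
  induction n with
  | zero => simp
  | succ n ih =>
    have h1 : (0:ℤ) ≤ q * n := by positivity
    have h2 : q * (n:ℤ) ≤ q * ((n:ℤ)+1) := by nlinarith
    have e1 : (q * ((n:ℕ)+1:ℕ) : ℤ) = q * ((n:ℤ)+1) := by push_cast; ring
    rw [e1, ← Finset.Ico_union_Ico_eq_Ico h1 h2,
      Finset.sum_union (Finset.Ico_disjoint_Ico_consecutive _ _ _), ih, Finset.sum_range_succ]
    congr 1
    have : Finset.Ico (q * (n:ℤ)) (q * ((n:ℤ)+1)) = (Finset.Ico (0:ℤ) q).map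
        (addLeftEmbedding (q * n)) := by
      rw [Finset.map_add_left_Ico]
      congr 1 <;> ring
    rw [this, Finset.sum_map]
    apply Finset.sum_congr rfl
    intro x _
    simp [addLeftEmbedding, add_comm]

lemma sum_Ico_int_eq_range (n : ℕ) (F : ℤ → M) :
    ∑ t ∈ Ico (0:ℤ) (n:ℤ), F t = ∑ t ∈ range n, F (t:ℤ) := by
  refine Finset.sum_nbij' (i := Int.toNat) (j := (Nat.cast : ℕ → ℤ)) ?_ ?_ ?_ ?_ ?_ <;>
    intro a ha <;> simp only [Finset.mem_Ico, Finset.mem_range] at *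
  · omega
  · omega
  · omega
  · omega
  · congr 1; omega

lemma sum_split (q : ℤ) (hq : 0 ≤ q) (n : ℕ) (h : ℤ → M) :
    ∑ x ∈ Ico (0:ℤ) (q * n), h x
      = ∑ x ∈ Ico (0:ℤ) q, ∑ t ∈ Ico (0:ℤ) (n:ℤ), h (x + q * t) := by
  rw [sum_Ico_split q hq n h, Finset.sum_comm]
  apply Finset.sum_congr rfl
  intro x _
  rw [sum_Ico_int_eq_range]

/-- Split each of three nested interval sums. -/
lemma sum3_split (q : ℤ) (hq : 0 ≤ q) (n : ℕ) (h : ℤ → ℤ → ℤ → M) :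
    ∑ x ∈ Ico (0:ℤ) (q * n), ∑ y ∈ Ico (0:ℤ) (q * n), ∑ z ∈ Ico (0:ℤ) (q * n), h x y z
      = ∑ x ∈ Ico (0:ℤ) q, ∑ y ∈ Ico (0:ℤ) q, ∑ z ∈ Ico (0:ℤ) q,
          ∑ t ∈ Ico (0:ℤ) (n:ℤ), ∑ u ∈ Ico (0:ℤ) (n:ℤ), ∑ v ∈ Ico (0:ℤ) (n:ℤ),
            h (x + q * t) (y + q * u) (z + q * v) := by
  rw [sum_split q hq n]
  apply Finset.sum_congr rfl; intro x _
  -- now: ∑ t, ∑ y-full, ∑ z-full  →  want  ∑ y₀ ∑ z₀ ∑ t ∑ u ∑ v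
  calc ∑ t ∈ Ico (0:ℤ) (n:ℤ), ∑ y ∈ Ico (0:ℤ) (q*n), ∑ z ∈ Ico (0:ℤ) (q*n), h (x+q*t) y z
      = ∑ t ∈ Ico (0:ℤ) (n:ℤ), ∑ y ∈ Ico (0:ℤ) q, ∑ u ∈ Ico (0:ℤ) (n:ℤ),
          ∑ z ∈ Ico (0:ℤ) (q*n), h (x+q*t) (y+q*u) z := by
        apply Finset.sum_congr rfl; intro t _
        rw [sum_split q hq n]
    _ = ∑ y ∈ Ico (0:ℤ) q, ∑ t ∈ Ico (0:ℤ) (n:ℤ), ∑ u ∈ Ico (0:ℤ) (n:ℤ),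
          ∑ z ∈ Ico (0:ℤ) (q*n), h (x+q*t) (y+q*u) z := Finset.sum_comm
    _ = ∑ y ∈ Ico (0:ℤ) q, ∑ t ∈ Ico (0:ℤ) (n:ℤ), ∑ u ∈ Ico (0:ℤ) (n:ℤ),
          ∑ z ∈ Ico (0:ℤ) q, ∑ v ∈ Ico (0:ℤ) (n:ℤ), h (x+q*t) (y+q*u) (z+q*v) := by
        apply Finset.sum_congr rfl; intro y _
        apply Finset.sum_congr rfl; intro t _
        apply Finset.sum_congr rfl; intro u _
        rw [sum_split q hq n]
    _ = ∑ y ∈ Ico (0:ℤ) q, ∑ t ∈ Ico (0:ℤ) (n:ℤ), ∑ z ∈ Ico (0:ℤ) q,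
          ∑ u ∈ Ico (0:ℤ) (n:ℤ), ∑ v ∈ Ico (0:ℤ) (n:ℤ), h (x+q*t) (y+q*u) (z+q*v) := by
        apply Finset.sum_congr rfl; intro y _
        apply Finset.sum_congr rfl; intro t _
        exact Finset.sum_comm
    _ = ∑ y ∈ Ico (0:ℤ) q, ∑ z ∈ Ico (0:ℤ) q, ∑ t ∈ Ico (0:ℤ) (n:ℤ),
          ∑ u ∈ Ico (0:ℤ) (n:ℤ), ∑ v ∈ Ico (0:ℤ) (n:ℤ), h (x+q*t) (y+q*u) (z+q*v) := by
        apply Finset.sum_congr rfl; intro y _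
        exact Finset.sum_comm

end



noncomputable def cntP (p n : ℕ) (P : ℤ → ℤ → ℤ → Prop) [∀ x y z, Decidable (P x y z)] : ℕ :=
  ∑ x ∈ Ico (0:ℤ) ((p:ℤ)^n), ∑ y ∈ Ico (0:ℤ) ((p:ℤ)^n), ∑ z ∈ Ico (0:ℤ) ((p:ℤ)^n),
    if P x y z then 1 else 0

def sing (p : ℕ) (g₁ g₂ g₃ : ℤ → ℤ → ℤ → ℤ) (x y z : ℤ) : Prop :=
  (p:ℤ) ∣ g₁ x y z ∧ (p:ℤ) ∣ g₂ x y z ∧ (p:ℤ) ∣ g₃ x y z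

instance (p : ℕ) (g₁ g₂ g₃ : ℤ → ℤ → ℤ → ℤ) (x y z : ℤ) :
    Decidable (sing p g₁ g₂ g₃ x y z) := by unfold sing; infer_instance

lemma henselNS (p : ℕ) (hp : p.Prime) (f g₁ g₂ g₃ : ℤ → ℤ → ℤ → ℤ)
    (hTay : ∀ x y z u v w P : ℤ, ∃ E : ℤ, f (x+P*u) (y+P*v) (z+P*w)
        = f x y z + P*(u * g₁ x y z + v * g₂ x y z + w * g₃ x y z) + P^2 * E)
    (hg₁ : ∀ x y z u v w : ℤ, ∃ E : ℤ,
        g₁ (x+(p:ℤ)*u) (y+(p:ℤ)*v) (z+(p:ℤ)*w) = g₁ x y z + (p:ℤ)*E)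
    (hg₂ : ∀ x y z u v w : ℤ, ∃ E : ℤ,
        g₂ (x+(p:ℤ)*u) (y+(p:ℤ)*v) (z+(p:ℤ)*w) = g₂ x y z + (p:ℤ)*E)
    (hg₃ : ∀ x y z u v w : ℤ, ∃ E : ℤ,
        g₃ (x+(p:ℤ)*u) (y+(p:ℤ)*v) (z+(p:ℤ)*w) = g₃ x y z + (p:ℤ)*E)
    (K : ℕ) (hK : 1 ≤ K) :
    cntP p (K+1) (fun x y z => ¬ sing p g₁ g₂ g₃ x y z ∧ (p:ℤ)^(K+1) ∣ f x y z)
      = p^2 * cntP p K (fun x y z => ¬ sing p g₁ g₂ g₃ x y z ∧ (p:ℤ)^K ∣ f x y z) := by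
  classical
  set q : ℤ := (p:ℤ)^K with hqdef
  have hq0 : (0:ℤ) ≤ q := by positivity
  have hppos : (0:ℤ) < (p:ℤ) := by exact_mod_cast hp.pos
  have hqne : q ≠ 0 := by rw [hqdef]; positivity
  have hqp : q = (p:ℤ) * (p:ℤ)^(K-1) := by
    rw [hqdef, ← pow_succ']
    congr 1
    omega
  have hpow : ((p:ℤ)^(K+1)) = q * (p:ℕ) := by rw [hqdef]; push_cast; ring
  unfold cntP
  rw [hpow]
  rw [sum3_split q hq0 p]
  rw [Finset.mul_sum]
  apply Finset.sum_congr rfl; intro x hx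
  rw [Finset.mul_sum]
  apply Finset.sum_congr rfl; intro y hy
  rw [Finset.mul_sum]
  apply Finset.sum_congr rfl; intro z hz
  beta_reduce
  -- sing is invariant under the shifts
  have hsing : ∀ t u v : ℤ, sing p g₁ g₂ g₃ (x + q*t) (y + q*u) (z + q*v)
      ↔ sing p g₁ g₂ g₃ x y z := by
    intro t u v
    have harg : ∀ w t' : ℤ, w + q * t' = w + (p:ℤ) * ((p:ℤ)^(K-1) * t') := by
      intro w t'; rw [hqp]; ring
    obtain ⟨E₁, hE₁⟩ := hg₁ x y z ((p:ℤ)^(K-1) * t) ((p:ℤ)^(K-1) * u) ((p:ℤ)^(K-1) * v)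
    obtain ⟨E₂, hE₂⟩ := hg₂ x y z ((p:ℤ)^(K-1) * t) ((p:ℤ)^(K-1) * u) ((p:ℤ)^(K-1) * v)
    obtain ⟨E₃, hE₃⟩ := hg₃ x y z ((p:ℤ)^(K-1) * t) ((p:ℤ)^(K-1) * u) ((p:ℤ)^(K-1) * v)
    unfold sing
    rw [harg x t, harg y u, harg z v, hE₁, hE₂, hE₃]
    constructor
    · rintro ⟨h1, h2, h3⟩
      exact ⟨(dvd_add_left ⟨E₁, rfl⟩).mp h1, (dvd_add_left ⟨E₂, rfl⟩).mp h2,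
             (dvd_add_left ⟨E₃, rfl⟩).mp h3⟩
    · rintro ⟨h1, h2, h3⟩
      exact ⟨dvd_add h1 ⟨E₁, rfl⟩, dvd_add h2 ⟨E₂, rfl⟩, dvd_add h3 ⟨E₃, rfl⟩⟩
  by_cases hs : sing p g₁ g₂ g₃ x y z
  · -- singular base point: both sides are 0
    have : ∀ t ∈ Ico (0:ℤ) (p:ℤ), ∀ u ∈ Ico (0:ℤ) (p:ℤ), ∀ v ∈ Ico (0:ℤ) (p:ℤ),
        (if ¬ sing p g₁ g₂ g₃ (x+q*t) (y+q*u) (z+q*v) ∧ q * (p:ℕ) ∣ f (x+q*t) (y+q*u) (z+q*v)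
          then (1:ℕ) else 0) = 0 := by
      intro t _ u _ v _
      rw [if_neg]
      rintro ⟨hns, -⟩
      exact hns ((hsing t u v).mpr hs)
    calc (∑ t ∈ Ico (0:ℤ) (p:ℤ), ∑ u ∈ Ico (0:ℤ) (p:ℤ), ∑ v ∈ Ico (0:ℤ) (p:ℤ),
            if ¬ sing p g₁ g₂ g₃ (x+q*t) (y+q*u) (z+q*v) ∧
              q * (p:ℕ) ∣ f (x+q*t) (y+q*u) (z+q*v) then (1:ℕ) else 0)
        = 0 := by
          apply Finset.sum_eq_zero; intro t ht
          apply Finset.sum_eq_zero; intro u hu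
          apply Finset.sum_eq_zero; intro v hv
          exact this t ht u hu v hv
      _ = p^2 * (if ¬ sing p g₁ g₂ g₃ x y z ∧ q ∣ f x y z then 1 else 0) := by
          rw [if_neg (fun hc => hc.1 hs), mul_zero]
  · by_cases hf : q ∣ f x y z
    · -- nonsingular solution: exactly p² lifts
      obtain ⟨d, hd⟩ := hf
      have key : ∀ t u v : ℤ,
          ((¬ sing p g₁ g₂ g₃ (x+q*t) (y+q*u) (z+q*v) ∧
            q * (p:ℕ) ∣ f (x+q*t) (y+q*u) (z+q*v))
          ↔ ((p:ℤ) ∣ (g₁ x y z)*t + (g₂ x y z)*u + (g₃ x y z)*v - (-d))) := by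
        intro t u v
        obtain ⟨E, hE⟩ := hTay x y z t u v q
        have hlift : f (x+q*t) (y+q*u) (z+q*v) = q * (d + (t * g₁ x y z + u * g₂ x y z
            + v * g₃ x y z) + q * E) := by
          rw [hE, hd]; ring
        constructor
        · rintro ⟨-, hdvd⟩
          rw [hlift] at hdvd
          have := (mul_dvd_mul_iff_left hqne).mp hdvd
          -- (p:ℤ) ∣ d + L + q*E
          have hqE : (p:ℤ) ∣ q * E := by rw [hqp]; exact ⟨(p:ℤ)^(K-1)*E, by ring⟩
          have h2 : (p:ℤ) ∣ d + (t * g₁ x y z + u * g₂ x y z + v * g₃ x y z) :=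
            (dvd_add_left hqE).mp this
          have : (g₁ x y z)*t + (g₂ x y z)*u + (g₃ x y z)*v - (-d)
              = d + (t * g₁ x y z + u * g₂ x y z + v * g₃ x y z) := by ring
          rw [this]; exact h2
        · intro hdvd
          refine ⟨fun hc => hs ((hsing t u v).mp hc), ?_⟩
          rw [hlift]
          have hqE : (p:ℤ) ∣ q * E := by rw [hqp]; exact ⟨(p:ℤ)^(K-1)*E, by ring⟩
          have h2 : (p:ℤ) ∣ d + (t * g₁ x y z + u * g₂ x y z + v * g₃ x y z) + q * E := by
            apply dvd_add _ hqE
            have : d + (t * g₁ x y z + u * g₂ x y z + v * g₃ x y z)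
                = (g₁ x y z)*t + (g₂ x y z)*u + (g₃ x y z)*v - (-d) := by ring
            rw [this]; exact hdvd
          obtain ⟨e, he⟩ := h2
          exact ⟨e, by rw [he]; push_cast; ring⟩
      calc (∑ t ∈ Ico (0:ℤ) (p:ℤ), ∑ u ∈ Ico (0:ℤ) (p:ℤ), ∑ v ∈ Ico (0:ℤ) (p:ℤ),
              if ¬ sing p g₁ g₂ g₃ (x+q*t) (y+q*u) (z+q*v) ∧
                q * (p:ℕ) ∣ f (x+q*t) (y+q*u) (z+q*v) then (1:ℕ) else 0)
          = ∑ t ∈ Ico (0:ℤ) (p:ℤ), ∑ u ∈ Ico (0:ℤ) (p:ℤ), ∑ v ∈ Ico (0:ℤ) (p:ℤ),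
              if (p:ℤ) ∣ (g₁ x y z)*t + (g₂ x y z)*u + (g₃ x y z)*v - (-d)
              then (1:ℕ) else 0 := by
            apply Finset.sum_congr rfl; intro t _
            apply Finset.sum_congr rfl; intro u _
            apply Finset.sum_congr rfl; intro v _
            rw [if_congr (key t u v) rfl rfl]
        _ = p^2 := lin_count3 p hp _ _ _ _ (by unfold sing at hs; exact hs)
        _ = p^2 * (if ¬ sing p g₁ g₂ g₃ x y z ∧ q ∣ f x y z then 1 else 0) := by
            rw [if_pos ⟨hs, ⟨d, hd⟩⟩, mul_one]
    · -- not a solution mod q: no lifts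
      have : ∀ t u v : ℤ,
          ¬ (¬ sing p g₁ g₂ g₃ (x+q*t) (y+q*u) (z+q*v) ∧
            q * (p:ℕ) ∣ f (x+q*t) (y+q*u) (z+q*v)) := by
        intro t u v hc
        apply hf
        obtain ⟨E, hE⟩ := hTay x y z t u v q
        have h1 : q ∣ f (x+q*t) (y+q*u) (z+q*v) := dvd_trans ⟨(p:ℕ), rfl⟩ hc.2
        have : f x y z = f (x+q*t) (y+q*u) (z+q*v)
            - q * ((t * g₁ x y z + u * g₂ x y z + v * g₃ x y z) + q * E) := by
          rw [hE]; ring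
        rw [this]
        exact dvd_sub h1 ⟨_, rfl⟩
      calc (∑ t ∈ Ico (0:ℤ) (p:ℤ), ∑ u ∈ Ico (0:ℤ) (p:ℤ), ∑ v ∈ Ico (0:ℤ) (p:ℤ),
              if ¬ sing p g₁ g₂ g₃ (x+q*t) (y+q*u) (z+q*v) ∧
                q * (p:ℕ) ∣ f (x+q*t) (y+q*u) (z+q*v) then (1:ℕ) else 0)
          = 0 := by
            apply Finset.sum_eq_zero; intro t ht
            apply Finset.sum_eq_zero; intro u hu
            apply Finset.sum_eq_zero; intro v hv
            exact if_neg (this t u v)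
        _ = p^2 * (if ¬ sing p g₁ g₂ g₃ x y z ∧ q ∣ f x y z then 1 else 0) := by
            rw [if_neg (fun hc => hf hc.2), mul_zero]
/-- The family `x²+y²+z² + e(xy+yz+zx) - p^c·xyz - b`. -/
def Fe (p : ℕ) (e : ℤ) (c : ℕ) (b x y z : ℤ) : ℤ :=
  x^2 + y^2 + z^2 + e*(x*y + y*z + z*x) - (p:ℤ)^c * (x*y*z) - b

def Ge₁ (p : ℕ) (e : ℤ) (c : ℕ) (x y z : ℤ) : ℤ := 2*x + e*(y+z) - (p:ℤ)^c*(y*z)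
def Ge₂ (p : ℕ) (e : ℤ) (c : ℕ) (x y z : ℤ) : ℤ := 2*y + e*(x+z) - (p:ℤ)^c*(x*z)
def Ge₃ (p : ℕ) (e : ℤ) (c : ℕ) (x y z : ℤ) : ℤ := 2*z + e*(x+y) - (p:ℤ)^c*(x*y)

lemma Fe_tay (p : ℕ) (e : ℤ) (c : ℕ) (b : ℤ) : ∀ x y z u v w P : ℤ, ∃ E : ℤ,
    Fe p e c b (x+P*u) (y+P*v) (z+P*w) = Fe p e c b x y z
      + P*(u * Ge₁ p e c x y z + v * Ge₂ p e c x y z + w * Ge₃ p e c x y z) + P^2 * E := by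
  intro x y z u v w P
  exact ⟨u^2+v^2+w^2 + e*(u*v+v*w+w*u) - (p:ℤ)^c*(u*v*z + u*y*w + x*v*w + P*(u*v*w)),
    by unfold Fe Ge₁ Ge₂ Ge₃; ring⟩

lemma Ge₁_shift (p : ℕ) (e : ℤ) (c : ℕ) : ∀ x y z u v w : ℤ, ∃ E : ℤ,
    Ge₁ p e c (x+(p:ℤ)*u) (y+(p:ℤ)*v) (z+(p:ℤ)*w) = Ge₁ p e c x y z + (p:ℤ)*E := by
  intro x y z u v w
  exact ⟨2*u + e*(v+w) - (p:ℤ)^c*(y*w + v*z + (p:ℤ)*v*w), by unfold Ge₁; ring⟩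

lemma Ge₂_shift (p : ℕ) (e : ℤ) (c : ℕ) : ∀ x y z u v w : ℤ, ∃ E : ℤ,
    Ge₂ p e c (x+(p:ℤ)*u) (y+(p:ℤ)*v) (z+(p:ℤ)*w) = Ge₂ p e c x y z + (p:ℤ)*E := by
  intro x y z u v w
  exact ⟨2*v + e*(u+w) - (p:ℤ)^c*(x*w + u*z + (p:ℤ)*u*w), by unfold Ge₂; ring⟩

lemma Ge₃_shift (p : ℕ) (e : ℤ) (c : ℕ) : ∀ x y z u v w : ℤ, ∃ E : ℤ,
    Ge₃ p e c (x+(p:ℤ)*u) (y+(p:ℤ)*v) (z+(p:ℤ)*w) = Ge₃ p e c x y z + (p:ℤ)*E := by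
  intro x y z u v w
  exact ⟨2*w + e*(u+v) - (p:ℤ)^c*(x*v + u*y + (p:ℤ)*u*v), by unfold Ge₃; ring⟩

lemma not_p_dvd_two (p : ℕ) (hp : p.Prime) (hodd : p ≠ 2) : ¬ (p:ℤ) ∣ 2 := by
  intro h
  have h2 : (p:ℕ) ∣ 2 := by exact_mod_cast h
  exact hodd ((Nat.prime_dvd_prime_iff_eq hp Nat.prime_two).mp h2)

lemma p_dvd_of_dvd_two_mul (p : ℕ) (hp : p.Prime) (hodd : p ≠ 2) (x : ℤ)
    (h : (p:ℤ) ∣ 2*x) : (p:ℤ) ∣ x := by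
  have hprime : Prime (p:ℤ) := Int.prime_iff_natAbs_prime.mpr (by simpa using hp)
  rcases hprime.dvd_mul.mp h with h2 | hx
  · exact absurd h2 (not_p_dvd_two p hp hodd)
  · exact hx

lemma sing_Fe (p : ℕ) (hp : p.Prime) (hodd : p ≠ 2) (e : ℤ) (he : e = 0 ∨ e = -2)
    (c : ℕ) (hc : 1 ≤ c) (x y z : ℤ) :
    sing p (Ge₁ p e c) (Ge₂ p e c) (Ge₃ p e c) x y z
      ↔ ((p:ℤ) ∣ x ∧ (p:ℤ) ∣ y ∧ (p:ℤ) ∣ z) := by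
  have hpc : (p:ℤ) ∣ (p:ℤ)^c := dvd_pow_self _ (by omega)
  constructor
  · rintro ⟨h1, h2, h3⟩
    unfold Ge₁ at h1; unfold Ge₂ at h2; unfold Ge₃ at h3
    have e1 : (p:ℤ) ∣ 2*x + e*(y+z) := by
      have := dvd_sub h1 (Dvd.dvd.mul_right hpc (-(y*z)))
      rw [show 2*x + e*(y+z) = 2*x + e*(y+z) - (p:ℤ)^c*(y*z) - (p:ℤ)^c*(-(y*z)) by ring]; exact this
    have e2 : (p:ℤ) ∣ 2*y + e*(x+z) := by
      have := dvd_sub h2 (Dvd.dvd.mul_right hpc (-(x*z)))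
      rw [show 2*y + e*(x+z) = 2*y + e*(x+z) - (p:ℤ)^c*(x*z) - (p:ℤ)^c*(-(x*z)) by ring]; exact this
    have e3 : (p:ℤ) ∣ 2*z + e*(x+y) := by
      have := dvd_sub h3 (Dvd.dvd.mul_right hpc (-(x*y)))
      rw [show 2*z + e*(x+y) = 2*z + e*(x+y) - (p:ℤ)^c*(x*y) - (p:ℤ)^c*(-(x*y)) by ring]; exact this
    rcases he with rfl | rfl
    · simp only [zero_mul, add_zero] at e1 e2 e3
      exact ⟨p_dvd_of_dvd_two_mul p hp hodd x e1, p_dvd_of_dvd_two_mul p hp hodd y e2,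
        p_dvd_of_dvd_two_mul p hp hodd z e3⟩
    · have f1 : (p:ℤ) ∣ 2*(x - y - z) := by convert e1 using 1; ring
      have f2 : (p:ℤ) ∣ 2*(y - x - z) := by convert e2 using 1; ring
      have f3 : (p:ℤ) ∣ 2*(z - x - y) := by convert e3 using 1; ring
      have g1 := p_dvd_of_dvd_two_mul p hp hodd _ f1
      have g2 := p_dvd_of_dvd_two_mul p hp hodd _ f2
      have g3 := p_dvd_of_dvd_two_mul p hp hodd _ f3
      have hx : (p:ℤ) ∣ 2*x := by
        have hsum := dvd_add g2 g3
        have he' : y-x-z + (z-x-y) = -(2*x) := by ring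
        rw [he'] at hsum
        exact dvd_neg.mp hsum
      have hy : (p:ℤ) ∣ 2*y := by
        have hsum := dvd_add g1 g3
        have he' : x-y-z + (z-x-y) = -(2*y) := by ring
        rw [he'] at hsum
        exact dvd_neg.mp hsum
      have hz : (p:ℤ) ∣ 2*z := by
        have hsum := dvd_add g1 g2
        have he' : x-y-z + (y-x-z) = -(2*z) := by ring
        rw [he'] at hsum
        exact dvd_neg.mp hsum
      exact ⟨p_dvd_of_dvd_two_mul p hp hodd x hx, p_dvd_of_dvd_two_mul p hp hodd y hy,
        p_dvd_of_dvd_two_mul p hp hodd z hz⟩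
  · rintro ⟨hx, hy, hz⟩
    refine ⟨?_, ?_, ?_⟩
    · unfold Ge₁
      exact dvd_sub (dvd_add (hx.mul_left 2) ((dvd_add hy hz).mul_left e))
        (Dvd.dvd.mul_right hpc _)
    · unfold Ge₂
      exact dvd_sub (dvd_add (hy.mul_left 2) ((dvd_add hx hz).mul_left e))
        (Dvd.dvd.mul_right hpc _)
    · unfold Ge₃
      exact dvd_sub (dvd_add (hz.mul_left 2) ((dvd_add hx hy).mul_left e))
        (Dvd.dvd.mul_right hpc _)
section cntPlemmas
variable (p n : ℕ)

lemma cntP_congr (P Q : ℤ → ℤ → ℤ → Prop) [∀ x y z, Decidable (P x y z)]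
    [∀ x y z, Decidable (Q x y z)] (h : ∀ x y z, P x y z ↔ Q x y z) :
    cntP p n P = cntP p n Q := by
  unfold cntP
  apply Finset.sum_congr rfl; intro x _
  apply Finset.sum_congr rfl; intro y _
  apply Finset.sum_congr rfl; intro z _
  exact if_congr (h x y z) rfl rfl

lemma cntP_zero (P : ℤ → ℤ → ℤ → Prop) [∀ x y z, Decidable (P x y z)]
    (h : ∀ x y z, ¬ P x y z) : cntP p n P = 0 := by
  unfold cntP
  apply Finset.sum_eq_zero; intro x _
  apply Finset.sum_eq_zero; intro y _
  apply Finset.sum_eq_zero; intro z _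
  exact if_neg (h x y z)

lemma cntP_split (P Q : ℤ → ℤ → ℤ → Prop) [∀ x y z, Decidable (P x y z)]
    [∀ x y z, Decidable (Q x y z)] :
    cntP p n P = cntP p n (fun x y z => ¬ Q x y z ∧ P x y z)
      + cntP p n (fun x y z => Q x y z ∧ P x y z) := by
  unfold cntP
  rw [← Finset.sum_add_distrib]
  apply Finset.sum_congr rfl; intro x _
  rw [← Finset.sum_add_distrib]
  apply Finset.sum_congr rfl; intro y _
  rw [← Finset.sum_add_distrib]
  apply Finset.sum_congr rfl; intro z _
  by_cases hQ : Q x y z <;> by_cases hP : P x y z <;> simp [hQ, hP]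

end cntPlemmas

lemma sum_pdvd_reindex {M : Type*} [AddCommMonoid M] (p : ℕ) (hp : 0 < p) (q : ℤ) (hq : 0 ≤ q)
    (h : ℤ → M) :
    ∑ x ∈ Ico (0:ℤ) ((p:ℤ)*q), (if (p:ℤ) ∣ x then h x else 0)
      = ∑ X ∈ Ico (0:ℤ) q, h ((p:ℤ)*X) := by
  have hp' : (0:ℤ) < (p:ℤ) := by exact_mod_cast hp
  rw [← Finset.sum_filter]
  have hset : (Ico (0:ℤ) ((p:ℤ)*q)).filter (fun x => (p:ℤ) ∣ x)
      = (Ico (0:ℤ) q).map ⟨fun X => (p:ℤ)*X, mul_right_injective₀ (ne_of_gt hp')⟩ := by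
    ext x
    simp only [Finset.mem_filter, Finset.mem_Ico, Finset.mem_map, Function.Embedding.coeFn_mk]
    constructor
    · rintro ⟨⟨hx0, hxlt⟩, ⟨X, rfl⟩⟩
      refine ⟨X, ⟨?_, ?_⟩, rfl⟩
      · exact nonneg_of_mul_nonneg_right hx0 hp'
      · exact lt_of_mul_lt_mul_left hxlt (le_of_lt hp')
    · rintro ⟨X, ⟨hX0, hXlt⟩, rfl⟩
      exact ⟨⟨by positivity, by exact (mul_lt_mul_iff_right₀ hp').mpr hXlt⟩, ⟨X, rfl⟩⟩
  rw [hset, Finset.sum_map]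
  simp

/-- Peeling off the three `p ∣ ·` conditions. -/
lemma cntP_pdvd (p : ℕ) (hp : 0 < p) (n : ℕ) (hn : 1 ≤ n) (D : ℤ → ℤ → ℤ → Prop)
    [∀ x y z, Decidable (D x y z)] :
    cntP p n (fun x y z => ((p:ℤ) ∣ x ∧ (p:ℤ) ∣ y ∧ (p:ℤ) ∣ z) ∧ D x y z)
      = ∑ X ∈ Ico (0:ℤ) ((p:ℤ)^(n-1)), ∑ Y ∈ Ico (0:ℤ) ((p:ℤ)^(n-1)),
          ∑ Z ∈ Ico (0:ℤ) ((p:ℤ)^(n-1)),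
            if D ((p:ℤ)*X) ((p:ℤ)*Y) ((p:ℤ)*Z) then 1 else 0 := by
  have hq : (0:ℤ) ≤ (p:ℤ)^(n-1) := by positivity
  have hbound : ((p:ℤ)^n) = (p:ℤ) * (p:ℤ)^(n-1) := by
    rw [← pow_succ']
    congr 1
    omega
  unfold cntP
  rw [hbound]
  calc (∑ x ∈ Ico (0:ℤ) ((p:ℤ) * (p:ℤ)^(n-1)), ∑ y ∈ Ico (0:ℤ) ((p:ℤ) * (p:ℤ)^(n-1)),
          ∑ z ∈ Ico (0:ℤ) ((p:ℤ) * (p:ℤ)^(n-1)),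
            if ((p:ℤ) ∣ x ∧ (p:ℤ) ∣ y ∧ (p:ℤ) ∣ z) ∧ D x y z then 1 else 0)
      = ∑ x ∈ Ico (0:ℤ) ((p:ℤ) * (p:ℤ)^(n-1)),
          (if (p:ℤ) ∣ x then (∑ y ∈ Ico (0:ℤ) ((p:ℤ) * (p:ℤ)^(n-1)),
            ∑ z ∈ Ico (0:ℤ) ((p:ℤ) * (p:ℤ)^(n-1)),
              if ((p:ℤ) ∣ y ∧ (p:ℤ) ∣ z) ∧ D x y z then 1 else 0) else 0) := by
        apply Finset.sum_congr rfl; intro x _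
        by_cases hx : (p:ℤ) ∣ x
        · rw [if_pos hx]
          apply Finset.sum_congr rfl; intro y _
          apply Finset.sum_congr rfl; intro z _
          apply if_congr _ rfl rfl
          constructor
          · rintro ⟨⟨-, h2, h3⟩, h4⟩; exact ⟨⟨h2, h3⟩, h4⟩
          · rintro ⟨⟨h2, h3⟩, h4⟩; exact ⟨⟨hx, h2, h3⟩, h4⟩
        · rw [if_neg hx]
          apply Finset.sum_eq_zero; intro y _
          apply Finset.sum_eq_zero; intro z _
          exact if_neg (fun hc => hx hc.1.1)
    _ = ∑ X ∈ Ico (0:ℤ) ((p:ℤ)^(n-1)), ∑ y ∈ Ico (0:ℤ) ((p:ℤ) * (p:ℤ)^(n-1)),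
          ∑ z ∈ Ico (0:ℤ) ((p:ℤ) * (p:ℤ)^(n-1)),
            if ((p:ℤ) ∣ y ∧ (p:ℤ) ∣ z) ∧ D ((p:ℤ)*X) y z then 1 else 0 :=
        sum_pdvd_reindex p hp _ hq _
    _ = ∑ X ∈ Ico (0:ℤ) ((p:ℤ)^(n-1)), ∑ Y ∈ Ico (0:ℤ) ((p:ℤ)^(n-1)),
          ∑ z ∈ Ico (0:ℤ) ((p:ℤ) * (p:ℤ)^(n-1)),
            if ((p:ℤ) ∣ z) ∧ D ((p:ℤ)*X) ((p:ℤ)*Y) z then 1 else 0 := by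
        apply Finset.sum_congr rfl; intro X _
        calc (∑ y ∈ Ico (0:ℤ) ((p:ℤ) * (p:ℤ)^(n-1)), ∑ z ∈ Ico (0:ℤ) ((p:ℤ) * (p:ℤ)^(n-1)),
                if ((p:ℤ) ∣ y ∧ (p:ℤ) ∣ z) ∧ D ((p:ℤ)*X) y z then 1 else 0)
            = ∑ y ∈ Ico (0:ℤ) ((p:ℤ) * (p:ℤ)^(n-1)),
                (if (p:ℤ) ∣ y then (∑ z ∈ Ico (0:ℤ) ((p:ℤ) * (p:ℤ)^(n-1)),
                  if ((p:ℤ) ∣ z) ∧ D ((p:ℤ)*X) y z then 1 else 0) else 0) := by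
              apply Finset.sum_congr rfl; intro y _
              by_cases hy : (p:ℤ) ∣ y
              · rw [if_pos hy]
                apply Finset.sum_congr rfl; intro z _
                apply if_congr _ rfl rfl
                constructor
                · rintro ⟨⟨-, h3⟩, h4⟩; exact ⟨h3, h4⟩
                · rintro ⟨h3, h4⟩; exact ⟨⟨hy, h3⟩, h4⟩
              · rw [if_neg hy]
                apply Finset.sum_eq_zero; intro z _
                exact if_neg (fun hc => hy hc.1.1)
          _ = _ := sum_pdvd_reindex p hp _ hq _
    _ = ∑ X ∈ Ico (0:ℤ) ((p:ℤ)^(n-1)), ∑ Y ∈ Ico (0:ℤ) ((p:ℤ)^(n-1)),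
          ∑ Z ∈ Ico (0:ℤ) ((p:ℤ)^(n-1)),
            if D ((p:ℤ)*X) ((p:ℤ)*Y) ((p:ℤ)*Z) then 1 else 0 := by
        apply Finset.sum_congr rfl; intro X _
        apply Finset.sum_congr rfl; intro Y _
        calc (∑ z ∈ Ico (0:ℤ) ((p:ℤ) * (p:ℤ)^(n-1)),
                if ((p:ℤ) ∣ z) ∧ D ((p:ℤ)*X) ((p:ℤ)*Y) z then 1 else 0)
            = ∑ z ∈ Ico (0:ℤ) ((p:ℤ) * (p:ℤ)^(n-1)),
                (if (p:ℤ) ∣ z then (if D ((p:ℤ)*X) ((p:ℤ)*Y) z then 1 else 0) else 0) := by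
              apply Finset.sum_congr rfl; intro z _
              by_cases hz : (p:ℤ) ∣ z
              · rw [if_pos hz]
                apply if_congr _ rfl rfl
                constructor
                · rintro ⟨-, h4⟩; exact h4
                · intro h4; exact ⟨hz, h4⟩
              · rw [if_neg hz]
                exact if_neg (fun hc => hz hc.1)
          _ = _ := sum_pdvd_reindex p hp _ hq _

/-- Collapsing a sum mod `p^{k+1}` whose condition only depends on values mod `p^k`. -/
lemma cntP_collapse (p : ℕ) (hp : 0 < p) (k : ℕ) (g : ℤ → ℤ → ℤ → ℤ)
    (hshift : ∀ x y z t u v : ℤ, ∃ E : ℤ, g (x + (p:ℤ)^k*t) (y + (p:ℤ)^k*u) (z + (p:ℤ)^k*v)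
      = g x y z + (p:ℤ)^k*E) :
    (∑ X ∈ Ico (0:ℤ) ((p:ℤ)^(k+1)), ∑ Y ∈ Ico (0:ℤ) ((p:ℤ)^(k+1)),
        ∑ Z ∈ Ico (0:ℤ) ((p:ℤ)^(k+1)),
          if (p:ℤ)^k ∣ g X Y Z then (1:ℕ) else 0)
      = p^3 * cntP p k (fun x y z => (p:ℤ)^k ∣ g x y z) := by
  have hq : (0:ℤ) ≤ (p:ℤ)^k := by positivity
  have hbound : ((p:ℤ)^(k+1)) = (p:ℤ)^k * (p:ℕ) := by push_cast; ring
  rw [hbound, sum3_split _ hq p]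
  unfold cntP
  rw [Finset.mul_sum]
  apply Finset.sum_congr rfl; intro x _
  rw [Finset.mul_sum]
  apply Finset.sum_congr rfl; intro y _
  rw [Finset.mul_sum]
  apply Finset.sum_congr rfl; intro z _
  have hiff : ∀ t u v : ℤ, ((p:ℤ)^k ∣ g (x + (p:ℤ)^k*t) (y + (p:ℤ)^k*u) (z + (p:ℤ)^k*v))
      ↔ ((p:ℤ)^k ∣ g x y z) := by
    intro t u v
    obtain ⟨E, hE⟩ := hshift x y z t u v
    rw [hE]
    exact dvd_add_left ⟨E, rfl⟩
  calc (∑ t ∈ Ico (0:ℤ) ((p:ℕ):ℤ), ∑ u ∈ Ico (0:ℤ) ((p:ℕ):ℤ), ∑ v ∈ Ico (0:ℤ) ((p:ℕ):ℤ),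
          if (p:ℤ)^k ∣ g (x + (p:ℤ)^k*t) (y + (p:ℤ)^k*u) (z + (p:ℤ)^k*v) then (1:ℕ) else 0)
      = ∑ t ∈ Ico (0:ℤ) ((p:ℕ):ℤ), ∑ u ∈ Ico (0:ℤ) ((p:ℕ):ℤ), ∑ v ∈ Ico (0:ℤ) ((p:ℕ):ℤ),
          if (p:ℤ)^k ∣ g x y z then (1:ℕ) else 0 := by
        apply Finset.sum_congr rfl; intro t _
        apply Finset.sum_congr rfl; intro u _
        apply Finset.sum_congr rfl; intro v _
        exact if_congr (hiff t u v) rfl rfl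
    _ = p^3 * (if (p:ℤ)^k ∣ g x y z then (1:ℕ) else 0) := by
        simp [Finset.sum_const, card_Ico_p]
        ring
lemma S_zero_p (p : ℕ) (hp : 0 < p) (n : ℕ) (hn : 1 ≤ n) (e : ℤ) (c : ℕ) (b : ℤ)
    (hb : ¬ (p:ℤ) ∣ b) :
    cntP p n (fun x y z => ((p:ℤ) ∣ x ∧ (p:ℤ) ∣ y ∧ (p:ℤ) ∣ z)
      ∧ (p:ℤ)^n ∣ Fe p e c b x y z) = 0 := by
  apply cntP_zero
  rintro x y z ⟨⟨⟨X, rfl⟩, ⟨Y, rfl⟩, ⟨Z, rfl⟩⟩, hsol⟩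
  apply hb
  have key : (p:ℤ) ∣ Fe p e c b ((p:ℤ)*X) ((p:ℤ)*Y) ((p:ℤ)*Z) + b :=
    ⟨(p:ℤ)*(X^2+Y^2+Z^2) + e*(p:ℤ)*(X*Y+Y*Z+Z*X) - (p:ℤ)^(c+2)*(X*Y*Z),
      by unfold Fe; ring⟩
  have h1 : (p:ℤ) ∣ Fe p e c b ((p:ℤ)*X) ((p:ℤ)*Y) ((p:ℤ)*Z) :=
    dvd_trans (dvd_pow_self _ (by omega)) hsol
  simpa using dvd_sub key h1

lemma S_zero_p2 (p : ℕ) (hp : 0 < p) (n : ℕ) (hn : 2 ≤ n) (e : ℤ) (c : ℕ) (b : ℤ)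
    (hb : ¬ (p:ℤ)^2 ∣ b) :
    cntP p n (fun x y z => ((p:ℤ) ∣ x ∧ (p:ℤ) ∣ y ∧ (p:ℤ) ∣ z)
      ∧ (p:ℤ)^n ∣ Fe p e c b x y z) = 0 := by
  apply cntP_zero
  rintro x y z ⟨⟨⟨X, rfl⟩, ⟨Y, rfl⟩, ⟨Z, rfl⟩⟩, hsol⟩
  apply hb
  have key : (p:ℤ)^2 ∣ Fe p e c b ((p:ℤ)*X) ((p:ℤ)*Y) ((p:ℤ)*Z) + b :=
    ⟨(X^2+Y^2+Z^2) + e*(X*Y+Y*Z+Z*X) - (p:ℤ)^(c+1)*(X*Y*Z), by unfold Fe; ring⟩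
  have h1 : (p:ℤ)^2 ∣ Fe p e c b ((p:ℤ)*X) ((p:ℤ)*Y) ((p:ℤ)*Z) :=
    dvd_trans (pow_dvd_pow _ (by omega)) hsol
  simpa using dvd_sub key h1

lemma S_rec (p : ℕ) (hp : 0 < p) (n : ℕ) (hn : 2 ≤ n) (e : ℤ) (c : ℕ) (b' : ℤ) :
    cntP p n (fun x y z => ((p:ℤ) ∣ x ∧ (p:ℤ) ∣ y ∧ (p:ℤ) ∣ z)
        ∧ (p:ℤ)^n ∣ Fe p e c ((p:ℤ)^2*b') x y z)
      = p^3 * cntP p (n-2) (fun x y z => (p:ℤ)^(n-2) ∣ Fe p e (c+1) b' x y z) := by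
  have hp' : (0:ℤ) < (p:ℤ) := by exact_mod_cast hp
  rw [cntP_pdvd p hp n (by omega)]
  have hiff : ∀ X Y Z : ℤ,
      ((p:ℤ)^n ∣ Fe p e c ((p:ℤ)^2*b') ((p:ℤ)*X) ((p:ℤ)*Y) ((p:ℤ)*Z))
      ↔ ((p:ℤ)^(n-2) ∣ Fe p e (c+1) b' X Y Z) := by
    intro X Y Z
    have hFe : Fe p e c ((p:ℤ)^2*b') ((p:ℤ)*X) ((p:ℤ)*Y) ((p:ℤ)*Z)
        = (p:ℤ)^2 * Fe p e (c+1) b' X Y Z := by unfold Fe; ring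
    have hpow : (p:ℤ)^n = (p:ℤ)^2 * (p:ℤ)^(n-2) := by
      rw [← pow_add]; congr 1; omega
    rw [hFe, hpow, mul_dvd_mul_iff_left (pow_ne_zero 2 (ne_of_gt hp'))]
  have hshift : ∀ x y z t u v : ℤ, ∃ E : ℤ,
      Fe p e (c+1) b' (x + (p:ℤ)^(n-2)*t) (y + (p:ℤ)^(n-2)*u) (z + (p:ℤ)^(n-2)*v)
        = Fe p e (c+1) b' x y z + (p:ℤ)^(n-2)*E := by
    intro x y z t u v
    obtain ⟨E, hE⟩ := Fe_tay p e (c+1) b' x y z t u v ((p:ℤ)^(n-2))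
    exact ⟨(t * Ge₁ p e (c+1) x y z + u * Ge₂ p e (c+1) x y z + v * Ge₃ p e (c+1) x y z)
      + (p:ℤ)^(n-2) * E, by rw [hE]; ring⟩
  have hexp : (p:ℤ)^(n-1) = (p:ℤ)^((n-2)+1) := by congr 1; omega
  calc (∑ X ∈ Ico (0:ℤ) ((p:ℤ)^(n-1)), ∑ Y ∈ Ico (0:ℤ) ((p:ℤ)^(n-1)),
          ∑ Z ∈ Ico (0:ℤ) ((p:ℤ)^(n-1)),
            if (p:ℤ)^n ∣ Fe p e c ((p:ℤ)^2*b') ((p:ℤ)*X) ((p:ℤ)*Y) ((p:ℤ)*Z)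
            then (1:ℕ) else 0)
      = ∑ X ∈ Ico (0:ℤ) ((p:ℤ)^((n-2)+1)), ∑ Y ∈ Ico (0:ℤ) ((p:ℤ)^((n-2)+1)),
          ∑ Z ∈ Ico (0:ℤ) ((p:ℤ)^((n-2)+1)),
            if (p:ℤ)^(n-2) ∣ Fe p e (c+1) b' X Y Z then (1:ℕ) else 0 := by
        rw [← hexp]
        apply Finset.sum_congr rfl; intro X _
        apply Finset.sum_congr rfl; intro Y _
        apply Finset.sum_congr rfl; intro Z _
        exact if_congr (hiff X Y Z) rfl rfl
    _ = p^3 * cntP p (n-2) (fun x y z => (p:ℤ)^(n-2) ∣ Fe p e (c+1) b' x y z) :=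
        cntP_collapse p hp (n-2) _ hshift

/-- The main counting claim for the auxiliary families (`c ≥ 1`). -/
theorem claimFe (p : ℕ) (hp : p.Prime) (hodd : p ≠ 2) (e : ℤ) (he : e = 0 ∨ e = -2) :
    ∀ m : ℕ, 2 ≤ m → ∀ (c : ℕ), 1 ≤ c → ∀ b : ℤ, ¬ ((p:ℤ)^(m-1) ∣ b) →
    cntP p m (fun x y z => (p:ℤ)^m ∣ Fe p e c b x y z)
      = p^2 * cntP p (m-1) (fun x y z => (p:ℤ)^(m-1) ∣ Fe p e c b x y z) := by
  intro m
  induction m using Nat.strong_induction_on with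
  | _ m IH =>
    intro hm c hc b hb
    obtain ⟨K, rfl⟩ : ∃ K, m = K + 1 := ⟨m - 1, by omega⟩
    have hK : 1 ≤ K := by omega
    simp only [Nat.add_sub_cancel] at hb ⊢
    have hppos : 0 < p := hp.pos
    -- split into nonsingular and singular parts
    have split1 := cntP_split p (K+1)
      (fun x y z => (p:ℤ)^(K+1) ∣ Fe p e c b x y z)
      (fun x y z => sing p (Ge₁ p e c) (Ge₂ p e c) (Ge₃ p e c) x y z)
    have split2 := cntP_split p K
      (fun x y z => (p:ℤ)^K ∣ Fe p e c b x y z)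
      (fun x y z => sing p (Ge₁ p e c) (Ge₂ p e c) (Ge₃ p e c) x y z)
    have hNS := henselNS p hp (Fe p e c b) (Ge₁ p e c) (Ge₂ p e c) (Ge₃ p e c)
      (Fe_tay p e c b) (Ge₁_shift p e c) (Ge₂_shift p e c) (Ge₃_shift p e c) K hK
    -- convert singular parts to coordinate-divisibility form
    have hconv : ∀ n : ℕ,
        cntP p n (fun x y z => sing p (Ge₁ p e c) (Ge₂ p e c) (Ge₃ p e c) x y z
          ∧ (p:ℤ)^n ∣ Fe p e c b x y z)
        = cntP p n (fun x y z => ((p:ℤ) ∣ x ∧ (p:ℤ) ∣ y ∧ (p:ℤ) ∣ z)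
          ∧ (p:ℤ)^n ∣ Fe p e c b x y z) := by
      intro n
      apply cntP_congr
      intro x y z
      rw [sing_Fe p hp hodd e he c hc]
    rw [split1, split2, hNS, hconv, hconv]
    -- it remains to show  S(K+1) = p² S(K)
    suffices hS : cntP p (K+1) (fun x y z => ((p:ℤ) ∣ x ∧ (p:ℤ) ∣ y ∧ (p:ℤ) ∣ z)
        ∧ (p:ℤ)^(K+1) ∣ Fe p e c b x y z)
        = p^2 * cntP p K (fun x y z => ((p:ℤ) ∣ x ∧ (p:ℤ) ∣ y ∧ (p:ℤ) ∣ z)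
        ∧ (p:ℤ)^K ∣ Fe p e c b x y z) by
      rw [hS]; ring
    by_cases hb1 : ¬ (p:ℤ) ∣ b
    · rw [S_zero_p p hppos (K+1) (by omega) e c b hb1,
        S_zero_p p hppos K (by omega) e c b hb1, mul_zero]
    push_neg at hb1
    by_cases hb2 : ¬ (p:ℤ)^2 ∣ b
    · have hK2 : 2 ≤ K := by
        rcases Nat.lt_or_ge K 2 with h | h
        · exfalso
          apply hb
          have : K = 1 := by omega
          rw [this, pow_one]
          exact hb1
        · exact h
      rw [S_zero_p2 p hppos (K+1) (by omega) e c b hb2,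
        S_zero_p2 p hppos K (by omega) e c b hb2, mul_zero]
    push_neg at hb2
    obtain ⟨b', rfl⟩ := hb2
    have hK3 : 3 ≤ K := by
      rcases Nat.lt_or_ge K 3 with h | h
      · exfalso
        apply hb
        calc (p:ℤ)^K ∣ (p:ℤ)^2 := pow_dvd_pow _ (by omega)
          _ ∣ (p:ℤ)^2 * b' := ⟨b', rfl⟩
      · exact h
    rw [S_rec p hppos (K+1) (by omega) e c b', S_rec p hppos K (by omega) e c b']
    have hb' : ¬ ((p:ℤ)^(K-2) ∣ b') := by
      intro hc'
      apply hb
      have : (p:ℤ)^K = (p:ℤ)^2 * (p:ℤ)^(K-2) := by rw [← pow_add]; congr 1; omega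
      rw [this]
      exact mul_dvd_mul_left _ hc'
    have hIH := IH (K-1) (by omega) (by omega) (c+1) (by omega) b' (by
      have : K - 1 - 1 = K - 2 := by omega
      rw [this]; exact hb')
    have e1 : K - 1 - 1 = K - 2 := by omega
    have e2 : K + 1 - 2 = K - 1 := by omega
    rw [e1] at hIH
    rw [e2, hIH]
    ring
lemma dvd_iff_cast (p : ℕ) [NeZero p] (t : ℤ) : (p:ℤ) ∣ t ↔ ((t : ZMod p) = 0) :=
  (ZMod.intCast_zmod_eq_zero_iff_dvd t p).symm

lemma two_ne_zero_zmod (p : ℕ) (hp : p.Prime) (hodd : p ≠ 2) : (2 : ZMod p) ≠ 0 := by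
  haveI : Fact p.Prime := ⟨hp⟩
  intro h
  have : ((2:ℕ) : ZMod p) = 0 := by exact_mod_cast h
  rw [ZMod.natCast_eq_zero_iff] at this
  exact hodd ((Nat.prime_dvd_prime_iff_eq hp Nat.prime_two).mp this)

/-- Classification of singular solutions of the Markoff equation mod `p`. -/
lemma MkSingClass (p : ℕ) (hp : p.Prime) (hodd : p ≠ 2) (a x y z : ℤ)
    (hs : sing p (Ge₁ p 0 0) (Ge₂ p 0 0) (Ge₃ p 0 0) x y z)
    (hsol : (p:ℤ) ∣ Fe p 0 0 a x y z) :
    (((p:ℤ) ∣ x ∧ (p:ℤ) ∣ y ∧ (p:ℤ) ∣ z) ∧ (p:ℤ) ∣ a)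
    ∨ ((p:ℤ) ∣ a - 4 ∧
        (((p:ℤ) ∣ x-2 ∧ (p:ℤ) ∣ y-2 ∧ (p:ℤ) ∣ z-2)
        ∨ ((p:ℤ) ∣ x-2 ∧ (p:ℤ) ∣ y+2 ∧ (p:ℤ) ∣ z+2)
        ∨ ((p:ℤ) ∣ x+2 ∧ (p:ℤ) ∣ y-2 ∧ (p:ℤ) ∣ z+2)
        ∨ ((p:ℤ) ∣ x+2 ∧ (p:ℤ) ∣ y+2 ∧ (p:ℤ) ∣ z-2))) := by
  haveI : Fact p.Prime := ⟨hp⟩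
  have h2 : (2 : ZMod p) ≠ 0 := two_ne_zero_zmod p hp hodd
  obtain ⟨hs1, hs2, hs3⟩ := hs
  have e1 : Ge₁ p 0 0 x y z = 2*x - y*z := by unfold Ge₁; ring
  have e2 : Ge₂ p 0 0 x y z = 2*y - x*z := by unfold Ge₂; ring
  have e3 : Ge₃ p 0 0 x y z = 2*z - x*y := by unfold Ge₃; ring
  have e4 : Fe p 0 0 a x y z = x^2+y^2+z^2 - x*y*z - a := by unfold Fe; ring
  rw [e1, dvd_iff_cast] at hs1
  rw [e2, dvd_iff_cast] at hs2
  rw [e3, dvd_iff_cast] at hs3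
  rw [e4, dvd_iff_cast] at hsol
  push_cast at hs1 hs2 hs3 hsol
  set X : ZMod p := (x : ZMod p) with hX
  set Y : ZMod p := (y : ZMod p) with hY
  set Z : ZMod p := (z : ZMod p) with hZ
  set A : ZMod p := (a : ZMod p) with hA
  -- hs1 : 2X - YZ = 0 etc., hsol : X²+Y²+Z² - XYZ - A = 0
  by_cases hX0 : X = 0
  · left
    have hY0 : Y = 0 := by
      have : 2*Y = 0 := by rw [sub_eq_zero] at hs2; rw [hs2, hX0]; ring
      rcases mul_eq_zero.mp this with h | h
      · exact absurd h h2
      · exact h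
    have hZ0 : Z = 0 := by
      have : 2*Z = 0 := by rw [sub_eq_zero] at hs3; rw [hs3, hX0]; ring
      rcases mul_eq_zero.mp this with h | h
      · exact absurd h h2
      · exact h
    have hA0 : A = 0 := by
      rw [hX0, hY0, hZ0] at hsol
      linear_combination -hsol
    refine ⟨⟨?_, ?_, ?_⟩, ?_⟩ <;> rw [dvd_iff_cast] <;> push_cast <;> assumption
  · right
    have hY0 : Y ≠ 0 := by
      intro h
      apply hX0
      have : 2*X = 0 := by rw [sub_eq_zero] at hs1; rw [hs1, h]; ring
      rcases mul_eq_zero.mp this with h' | h'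
      · exact absurd h' h2
      · exact h'
    have hZ0 : Z ≠ 0 := by
      intro h
      apply hX0
      have : 2*X = 0 := by rw [sub_eq_zero] at hs1; rw [hs1, h]; ring
      rcases mul_eq_zero.mp this with h' | h'
      · exact absurd h' h2
      · exact h'
    rw [sub_eq_zero] at hs1 hs2 hs3
    -- X² = 4 : from (2Y)(2Z) = (XZ)(XY)
    have hX2 : X^2 = 4 := by
      have h1 : 4*(Y*Z) = X^2*(Y*Z) := by
        calc 4*(Y*Z) = (2*Y)*(2*Z) := by ring
          _ = (X*Z)*(X*Y) := by rw [hs2, hs3]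
          _ = X^2*(Y*Z) := by ring
      have hYZ : Y*Z ≠ 0 := mul_ne_zero hY0 hZ0
      rcases mul_eq_zero.mp (show (4 - X^2)*(Y*Z) = 0 by linear_combination h1) with h | h
      · linear_combination -h
      · exact absurd h hYZ
    have hY2 : Y^2 = 4 := by
      have h1 : 4*(X*Z) = Y^2*(X*Z) := by
        calc 4*(X*Z) = (2*X)*(2*Z) := by ring
          _ = (Y*Z)*(X*Y) := by rw [hs1, hs3]
          _ = Y^2*(X*Z) := by ring
      have hXZ : X*Z ≠ 0 := mul_ne_zero hX0 hZ0
      rcases mul_eq_zero.mp (show (4 - Y^2)*(X*Z) = 0 by linear_combination h1) with h | h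
      · linear_combination -h
      · exact absurd h hXZ
    -- A = 4 : A = X²+Y²+Z²-XYZ with 2X² = XYZ etc.
    have h2X2 : 2*X^2 = X*Y*Z := by
      calc 2*X^2 = (2*X)*X := by ring
        _ = (Y*Z)*X := by rw [hs1]
        _ = X*Y*Z := by ring
    have h2Y2 : 2*Y^2 = X*Y*Z := by
      calc 2*Y^2 = (2*Y)*Y := by ring
        _ = (X*Z)*Y := by rw [hs2]
        _ = X*Y*Z := by ring
    have h2Z2 : 2*Z^2 = X*Y*Z := by
      calc 2*Z^2 = (2*Z)*Z := by ring
        _ = (X*Y)*Z := by rw [hs3]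
        _ = X*Y*Z := by ring
    have hZ2 : Z^2 = 4 := by
      have : 2*Z^2 = 2*X^2 := by rw [h2Z2, h2X2]
      have hz2 : Z^2 = X^2 := by
        have := mul_left_cancel₀ h2 this
        exact this
      rw [hz2, hX2]
    have hA4 : A = 4 := by
      have h8 : 2*A = 8 := by
        linear_combination (-2 : ZMod p)*hsol + h2Y2 + h2Z2 + 2*hX2
      have h8' : (8 : ZMod p) = 2*4 := by norm_num
      rw [h8'] at h8
      exact mul_left_cancel₀ h2 h8
    constructor
    · rw [dvd_iff_cast]; push_cast; rw [← hA, hA4]; ring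
    · -- determine the signs
      have hXpm : X = 2 ∨ X = -2 := by
        have : (X-2)*(X+2) = 0 := by linear_combination hX2
        rcases mul_eq_zero.mp this with h | h
        · left; linear_combination h
        · right; linear_combination h
      have hYpm : Y = 2 ∨ Y = -2 := by
        have : (Y-2)*(Y+2) = 0 := by linear_combination hY2
        rcases mul_eq_zero.mp this with h | h
        · left; linear_combination h
        · right; linear_combination h
      have hcast2 : ∀ w : ℤ, ((w:ZMod p) = 2) → (p:ℤ) ∣ w - 2 := by
        intro w hw
        rw [dvd_iff_cast]; push_cast; rw [hw]; ring
      have hcastm2 : ∀ w : ℤ, ((w:ZMod p) = -2) → (p:ℤ) ∣ w + 2 := by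
        intro w hw
        rw [dvd_iff_cast]; push_cast; rw [hw]; ring
      -- Z is determined by 2Z = XY
      rcases hXpm with hXv | hXv <;> rcases hYpm with hYv | hYv
      · -- X=2, Y=2 ⇒ Z=2
        have hZv : Z = 2 := by
          apply mul_left_cancel₀ h2
          rw [hs3, hXv, hYv] <;> norm_num
        left
        exact ⟨hcast2 x hXv, hcast2 y hYv, hcast2 z hZv⟩
      · -- X=2, Y=-2 ⇒ Z=-2
        have hZv : Z = -2 := by
          apply mul_left_cancel₀ h2
          rw [hs3, hXv, hYv] <;> norm_num
        right; left
        exact ⟨hcast2 x hXv, hcastm2 y hYv, hcastm2 z hZv⟩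
      · -- X=-2, Y=2 ⇒ Z=-2
        have hZv : Z = -2 := by
          apply mul_left_cancel₀ h2
          rw [hs3, hXv, hYv] <;> norm_num
        right; right; left
        exact ⟨hcastm2 x hXv, hcast2 y hYv, hcastm2 z hZv⟩
      · -- X=-2, Y=-2 ⇒ Z=2
        have hZv : Z = 2 := by
          apply mul_left_cancel₀ h2
          rw [hs3, hXv, hYv] <;> norm_num
        right; right; right
        exact ⟨hcastm2 x hXv, hcastm2 y hYv, hcast2 z hZv⟩
lemma cntP_eq_card (p n : ℕ) (P : ℤ → ℤ → ℤ → Prop) [∀ x y z, Decidable (P x y z)] :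
    cntP p n P = (((Ico (0:ℤ) ((p:ℤ)^n)) ×ˢ (Ico (0:ℤ) ((p:ℤ)^n)) ×ˢ (Ico (0:ℤ) ((p:ℤ)^n))).filter
      (fun w => P w.1 w.2.1 w.2.2)).card := by
  rw [Finset.card_filter, Finset.sum_product]
  unfold cntP
  apply Finset.sum_congr rfl; intro x _
  rw [Finset.sum_product]

lemma cntP_orSplit (p n : ℕ) (P Q R : ℤ → ℤ → ℤ → Prop) [∀ x y z, Decidable (P x y z)]
    [∀ x y z, Decidable (Q x y z)] [∀ x y z, Decidable (R x y z)]
    (hx : ∀ x y z, P x y z → Q x y z → False) :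
    cntP p n (fun x y z => (P x y z ∨ Q x y z) ∧ R x y z)
      = cntP p n (fun x y z => P x y z ∧ R x y z)
        + cntP p n (fun x y z => Q x y z ∧ R x y z) := by
  unfold cntP
  rw [← Finset.sum_add_distrib]
  apply Finset.sum_congr rfl; intro x _
  rw [← Finset.sum_add_distrib]
  apply Finset.sum_congr rfl; intro y _
  rw [← Finset.sum_add_distrib]
  apply Finset.sum_congr rfl; intro z _
  by_cases hP : P x y z <;> by_cases hQ : Q x y z <;> by_cases hR : R x y z <;>
    simp [hP, hQ, hR]
  exact hx x y z hP hQ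

lemma emod_sub_self_dvd (q a : ℤ) : q ∣ a % q - a := ⟨-(a/q), by rw [Int.emod_def]; ring⟩

lemma emod_eq_of_congr (q a x : ℤ) (h : q ∣ a - x) (h0 : 0 ≤ x) (h1 : x < q) : a % q = x := by
  obtain ⟨k, hk⟩ := h
  have : a = x + q * k := by linarith
  rw [this, Int.add_mul_emod_self_left]
  exact Int.emod_eq_of_lt h0 h1

lemma Fe_mod_congr (p : ℕ) (e : ℤ) (c : ℕ) (b : ℤ) (q x x' y y' z z' : ℤ)
    (hx : q ∣ x' - x) (hy : q ∣ y' - y) (hz : q ∣ z' - z) :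
    q ∣ Fe p e c b x' y' z' - Fe p e c b x y z := by
  obtain ⟨t, ht⟩ := hx
  obtain ⟨u, hu⟩ := hy
  obtain ⟨v, hv⟩ := hz
  obtain ⟨E, hE⟩ := Fe_tay p e c b x y z t u v q
  have hx' : x' = x + q*t := by linarith
  have hy' : y' = y + q*u := by linarith
  have hz' : z' = z + q*v := by linarith
  rw [hx', hy', hz', hE]
  exact ⟨(t * Ge₁ p e c x y z + u * Ge₂ p e c x y z + v * Ge₃ p e c x y z) + q * E, by ring⟩

lemma Fe_sign_shift (p : ℕ) (a ε₁ ε₂ ε₃ : ℤ) (h1 : ε₁ = 1 ∨ ε₁ = -1)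
    (h2 : ε₂ = 1 ∨ ε₂ = -1) (h3 : ε₃ = 1 ∨ ε₃ = -1) (hprod : ε₁*ε₂*ε₃ = 1) (X Y Z : ℤ) :
    Fe p 0 0 a (ε₁*(2+X)) (ε₂*(2+Y)) (ε₃*(2+Z)) = Fe p (-2) 0 (a-4) X Y Z := by
  rcases h1 with rfl|rfl <;> rcases h2 with rfl|rfl <;> rcases h3 with rfl|rfl <;>
    first
      | (unfold Fe; push_cast; ring1)
      | (exfalso; norm_num at hprod)

lemma Fe_sign_shift' (p : ℕ) (a ε₁ ε₂ ε₃ : ℤ) (h1 : ε₁ = 1 ∨ ε₁ = -1)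
    (h2 : ε₂ = 1 ∨ ε₂ = -1) (h3 : ε₃ = 1 ∨ ε₃ = -1) (hprod : ε₁*ε₂*ε₃ = 1) (x y z : ℤ) :
    Fe p (-2) 0 (a-4) (ε₁*x-2) (ε₂*y-2) (ε₃*z-2) = Fe p 0 0 a x y z := by
  rcases h1 with rfl|rfl <;> rcases h2 with rfl|rfl <;> rcases h3 with rfl|rfl <;>
    first
      | (unfold Fe; push_cast; ring1)
      | (exfalso; norm_num at hprod)

/-- Each sign-pattern count near `(2ε₁,2ε₂,2ε₃)` equals the count for the chart family. -/
lemma patcount (p : ℕ) (hp : p.Prime) (n : ℕ) (hn : 1 ≤ n) (a ε₁ ε₂ ε₃ : ℤ)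
    (h1 : ε₁ = 1 ∨ ε₁ = -1) (h2 : ε₂ = 1 ∨ ε₂ = -1) (h3 : ε₃ = 1 ∨ ε₃ = -1)
    (hprod : ε₁*ε₂*ε₃ = 1) :
    cntP p n (fun x y z => ((p:ℤ) ∣ x - 2*ε₁ ∧ (p:ℤ) ∣ y - 2*ε₂ ∧ (p:ℤ) ∣ z - 2*ε₃)
        ∧ (p:ℤ)^n ∣ Fe p 0 0 a x y z)
      = cntP p n (fun X Y Z => ((p:ℤ) ∣ X ∧ (p:ℤ) ∣ Y ∧ (p:ℤ) ∣ Z)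
        ∧ (p:ℤ)^n ∣ Fe p (-2) 0 (a-4) X Y Z) := by
  have hppos : (0:ℤ) < (p:ℤ) := by exact_mod_cast hp.pos
  set q : ℤ := (p:ℤ)^n with hqdef
  have hq0 : (0:ℤ) < q := by positivity
  have hpq : (p:ℤ) ∣ q := by rw [hqdef]; exact dvd_pow_self _ (by omega)
  have hsq1 : ε₁ * ε₁ = 1 := by rcases h1 with rfl|rfl <;> norm_num
  have hsq2 : ε₂ * ε₂ = 1 := by rcases h2 with rfl|rfl <;> norm_num
  have hsq3 : ε₃ * ε₃ = 1 := by rcases h3 with rfl|rfl <;> norm_num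
  rw [cntP_eq_card, cntP_eq_card]
  apply Finset.card_nbij'
    (i := fun w => ((ε₁*w.1-2) % q, (ε₂*w.2.1-2) % q, (ε₃*w.2.2-2) % q))
    (j := fun w => ((ε₁*(2+w.1)) % q, (ε₂*(2+w.2.1)) % q, (ε₃*(2+w.2.2)) % q))
  · -- i maps into target
    rintro ⟨x, y, z⟩ hw
    simp only [Finset.mem_coe, Finset.mem_filter, Finset.mem_product, Finset.mem_Ico] at hw ⊢
    obtain ⟨⟨hxm, hym, hzm⟩, ⟨hp1, hp2, hp3⟩, hsol⟩ := hw
    have hmem : ∀ t : ℤ, (0 ≤ t % q ∧ t % q < q) := fun t =>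
      ⟨Int.emod_nonneg t (ne_of_gt hq0), Int.emod_lt_of_pos t hq0⟩
    have hpat : ∀ (ε w : ℤ), ε*ε = 1 → (p:ℤ) ∣ w - 2*ε → (p:ℤ) ∣ (ε*w-2) % q := by
      intro ε w hsq hdvd
      obtain ⟨k, hk⟩ := hdvd
      have ha : (p:ℤ) ∣ ε*w - 2 := ⟨ε*k, by linear_combination ε*hk + 2*hsq⟩
      have hb : (p:ℤ) ∣ (ε*w-2) % q - (ε*w-2) := dvd_trans hpq (emod_sub_self_dvd q _)
      simpa using dvd_add hb ha
    refine ⟨⟨hmem _, hmem _, hmem _⟩, ⟨hpat ε₁ x hsq1 hp1, hpat ε₂ y hsq2 hp2,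
      hpat ε₃ z hsq3 hp3⟩, ?_⟩
    have hcong := Fe_mod_congr p (-2) 0 (a-4) q (ε₁*x-2) ((ε₁*x-2) % q) (ε₂*y-2)
      ((ε₂*y-2) % q) (ε₃*z-2) ((ε₃*z-2) % q)
      (emod_sub_self_dvd q _) (emod_sub_self_dvd q _) (emod_sub_self_dvd q _)
    have hex : Fe p (-2) 0 (a-4) (ε₁*x-2) (ε₂*y-2) (ε₃*z-2) = Fe p 0 0 a x y z :=
      Fe_sign_shift' p a ε₁ ε₂ ε₃ h1 h2 h3 hprod x y z
    have h' : q ∣ Fe p (-2) 0 (a-4) (ε₁*x-2) (ε₂*y-2) (ε₃*z-2) := by rw [hex]; exact hsol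
    simpa using dvd_add hcong h'
  · -- j maps into source
    rintro ⟨X, Y, Z⟩ hw
    simp only [Finset.mem_coe, Finset.mem_filter, Finset.mem_product, Finset.mem_Ico] at hw ⊢
    obtain ⟨⟨hXm, hYm, hZm⟩, ⟨hd1, hd2, hd3⟩, hsol⟩ := hw
    have hmem : ∀ t : ℤ, (0 ≤ t % q ∧ t % q < q) := fun t =>
      ⟨Int.emod_nonneg t (ne_of_gt hq0), Int.emod_lt_of_pos t hq0⟩
    have hpat : ∀ (ε W : ℤ), (p:ℤ) ∣ W → (p:ℤ) ∣ (ε*(2+W)) % q - 2*ε := by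
      intro ε W hdvd
      obtain ⟨k, hk⟩ := hdvd
      have ha : (p:ℤ) ∣ ε*(2+W) - 2*ε := ⟨ε*k, by linear_combination ε*hk⟩
      have hb : (p:ℤ) ∣ (ε*(2+W)) % q - ε*(2+W) := dvd_trans hpq (emod_sub_self_dvd q _)
      simpa using dvd_add hb ha
    refine ⟨⟨hmem _, hmem _, hmem _⟩, ⟨hpat ε₁ X hd1, hpat ε₂ Y hd2, hpat ε₃ Z hd3⟩, ?_⟩
    have hcong := Fe_mod_congr p 0 0 a q (ε₁*(2+X)) ((ε₁*(2+X)) % q) (ε₂*(2+Y))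
      ((ε₂*(2+Y)) % q) (ε₃*(2+Z)) ((ε₃*(2+Z)) % q)
      (emod_sub_self_dvd q _) (emod_sub_self_dvd q _) (emod_sub_self_dvd q _)
    have hex : Fe p 0 0 a (ε₁*(2+X)) (ε₂*(2+Y)) (ε₃*(2+Z)) = Fe p (-2) 0 (a-4) X Y Z :=
      Fe_sign_shift p a ε₁ ε₂ ε₃ h1 h2 h3 hprod X Y Z
    have h' : q ∣ Fe p 0 0 a (ε₁*(2+X)) (ε₂*(2+Y)) (ε₃*(2+Z)) := by rw [hex]; exact hsol
    simpa using dvd_add hcong h'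
  · -- left inverse
    rintro ⟨x, y, z⟩ hw
    simp only [Finset.mem_coe, Finset.mem_filter, Finset.mem_product, Finset.mem_Ico] at hw
    obtain ⟨⟨hxm, hym, hzm⟩, -⟩ := hw
    have comp : ∀ (ε w : ℤ), ε*ε = 1 → 0 ≤ w → w < q → (ε*(2 + (ε*w-2) % q)) % q = w := by
      intro ε w hsq h0 h1'
      apply emod_eq_of_congr
      · obtain ⟨k, hk⟩ : q ∣ (ε*w-2) % q - (ε*w-2) := emod_sub_self_dvd q _
        exact ⟨ε*k, by linear_combination ε*hk + w*hsq⟩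
      · exact h0
      · exact h1'
    simp only [Prod.mk.injEq]
    exact ⟨comp ε₁ x hsq1 hxm.1 hxm.2, comp ε₂ y hsq2 hym.1 hym.2, comp ε₃ z hsq3 hzm.1 hzm.2⟩
  · -- right inverse
    rintro ⟨X, Y, Z⟩ hw
    simp only [Finset.mem_coe, Finset.mem_filter, Finset.mem_product, Finset.mem_Ico] at hw
    obtain ⟨⟨hXm, hYm, hZm⟩, -⟩ := hw
    have comp : ∀ (ε W : ℤ), ε*ε = 1 → 0 ≤ W → W < q → (ε*((ε*(2+W)) % q)-2) % q = W := by
      intro ε W hsq h0 h1'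
      apply emod_eq_of_congr
      · obtain ⟨k, hk⟩ : q ∣ (ε*(2+W)) % q - ε*(2+W) := emod_sub_self_dvd q _
        exact ⟨ε*k, by linear_combination ε*hk + (2+W)*hsq⟩
      · exact h0
      · exact h1'
    simp only [Prod.mk.injEq]
    exact ⟨comp ε₁ X hsq1 hXm.1 hXm.2, comp ε₂ Y hsq2 hYm.1 hYm.2, comp ε₃ Z hsq3 hZm.1 hZm.2⟩
lemma not_p_dvd_four (p : ℕ) (hp : p.Prime) (hodd : p ≠ 2) : ¬ (p:ℤ) ∣ 4 := by
  intro h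
  have hprime : Prime (p:ℤ) := Int.prime_iff_natAbs_prime.mpr (by simpa using hp)
  have h' : (p:ℤ) ∣ 2*2 := by norm_num at h ⊢; exact_mod_cast h
  rcases hprime.dvd_mul.mp h' with h2 | h2 <;> exact not_p_dvd_two p hp hodd h2

lemma coords_sing (p : ℕ) (x y z : ℤ) (hx : (p:ℤ) ∣ x) (hy : (p:ℤ) ∣ y) (hz : (p:ℤ) ∣ z) :
    sing p (Ge₁ p 0 0) (Ge₂ p 0 0) (Ge₃ p 0 0) x y z := by
  refine ⟨?_, ?_, ?_⟩
  · have e1 : Ge₁ p 0 0 x y z = 2*x - y*z := by unfold Ge₁; ring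
    rw [e1]; exact dvd_sub (hx.mul_left 2) (hy.mul_right z)
  · have e2 : Ge₂ p 0 0 x y z = 2*y - x*z := by unfold Ge₂; ring
    rw [e2]; exact dvd_sub (hy.mul_left 2) (hx.mul_right z)
  · have e3 : Ge₃ p 0 0 x y z = 2*z - x*y := by unfold Ge₃; ring
    rw [e3]; exact dvd_sub (hz.mul_left 2) (hx.mul_right y)

lemma pat_sing (p : ℕ) (x y z sx sy sz : ℤ)
    (hx : (p:ℤ) ∣ x - sx) (hy : (p:ℤ) ∣ y - sy) (hz : (p:ℤ) ∣ z - sz)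
    (hgx : 2*sx - sy*sz = 0) (hgy : 2*sy - sx*sz = 0) (hgz : 2*sz - sx*sy = 0) :
    sing p (Ge₁ p 0 0) (Ge₂ p 0 0) (Ge₃ p 0 0) x y z := by
  refine ⟨?_, ?_, ?_⟩
  · have e1 : Ge₁ p 0 0 x y z = 2*x - y*z := by unfold Ge₁; ring
    rw [e1]
    have key : 2*x - y*z = 2*(x-sx) - (y-sy)*z - sy*(z-sz) + (2*sx - sy*sz) := by ring
    rw [hgx, add_zero] at key
    rw [key]
    exact dvd_sub (dvd_sub (hx.mul_left 2) (hy.mul_right z)) (hz.mul_left sy)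
  · have e2 : Ge₂ p 0 0 x y z = 2*y - x*z := by unfold Ge₂; ring
    rw [e2]
    have key : 2*y - x*z = 2*(y-sy) - (x-sx)*z - sx*(z-sz) + (2*sy - sx*sz) := by ring
    rw [hgy, add_zero] at key
    rw [key]
    exact dvd_sub (dvd_sub (hy.mul_left 2) (hx.mul_right z)) (hz.mul_left sx)
  · have e3 : Ge₃ p 0 0 x y z = 2*z - x*y := by unfold Ge₃; ring
    rw [e3]
    have key : 2*z - x*y = 2*(z-sz) - (x-sx)*y - sx*(y-sy) + (2*sz - sx*sy) := by ring
    rw [hgz, add_zero] at key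
    rw [key]
    exact dvd_sub (dvd_sub (hz.mul_left 2) (hx.mul_right y)) (hy.mul_left sx)

theorem claimMk (p : ℕ) (hp : p.Prime) (hodd : p ≠ 2) (ℓ : ℕ) (hl : 2 ≤ ℓ) (a : ℤ)
    (h : ¬ (p:ℤ)^(ℓ-1) ∣ a*(a-4)) :
    cntP p ℓ (fun x y z => (p:ℤ)^ℓ ∣ Fe p 0 0 a x y z)
      = p^2 * cntP p (ℓ-1) (fun x y z => (p:ℤ)^(ℓ-1) ∣ Fe p 0 0 a x y z) := by
  obtain ⟨K, rfl⟩ : ∃ K, ℓ = K + 1 := ⟨ℓ - 1, by omega⟩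
  have hK : 1 ≤ K := by omega
  simp only [Nat.add_sub_cancel] at h ⊢
  have hppos : 0 < p := hp.pos
  have split1 := cntP_split p (K+1)
    (fun x y z => (p:ℤ)^(K+1) ∣ Fe p 0 0 a x y z)
    (fun x y z => sing p (Ge₁ p 0 0) (Ge₂ p 0 0) (Ge₃ p 0 0) x y z)
  have split2 := cntP_split p K
    (fun x y z => (p:ℤ)^K ∣ Fe p 0 0 a x y z)
    (fun x y z => sing p (Ge₁ p 0 0) (Ge₂ p 0 0) (Ge₃ p 0 0) x y z)
  have hNS := henselNS p hp (Fe p 0 0 a) (Ge₁ p 0 0) (Ge₂ p 0 0) (Ge₃ p 0 0)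
    (Fe_tay p 0 0 a) (Ge₁_shift p 0 0) (Ge₂_shift p 0 0) (Ge₃_shift p 0 0) K hK
  rw [split1, split2, hNS]
  suffices hS : cntP p (K+1) (fun x y z => sing p (Ge₁ p 0 0) (Ge₂ p 0 0) (Ge₃ p 0 0) x y z
      ∧ (p:ℤ)^(K+1) ∣ Fe p 0 0 a x y z)
      = p^2 * cntP p K (fun x y z => sing p (Ge₁ p 0 0) (Ge₂ p 0 0) (Ge₃ p 0 0) x y z
      ∧ (p:ℤ)^K ∣ Fe p 0 0 a x y z) by
    rw [hS]; ring
  by_cases hA : (p:ℤ) ∣ a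
  · -- branch A : p ∣ a
    have hnB : ¬ (p:ℤ) ∣ a - 4 := by
      intro hc
      apply not_p_dvd_four p hp hodd
      simpa using dvd_sub hA hc
    have hb : ¬ (p:ℤ)^K ∣ a := fun hc => h (dvd_mul_of_dvd_left hc _)
    have hconvA : ∀ n : ℕ, 1 ≤ n →
        cntP p n (fun x y z => sing p (Ge₁ p 0 0) (Ge₂ p 0 0) (Ge₃ p 0 0) x y z
          ∧ (p:ℤ)^n ∣ Fe p 0 0 a x y z)
        = cntP p n (fun x y z => ((p:ℤ) ∣ x ∧ (p:ℤ) ∣ y ∧ (p:ℤ) ∣ z)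
          ∧ (p:ℤ)^n ∣ Fe p 0 0 a x y z) := by
      intro n hn
      apply cntP_congr
      intro x y z
      constructor
      · rintro ⟨hs, hsol⟩
        have hsolp : (p:ℤ) ∣ Fe p 0 0 a x y z :=
          dvd_trans (dvd_pow_self _ (by omega)) hsol
        rcases MkSingClass p hp hodd a x y z hs hsolp with ⟨hc, -⟩ | ⟨hc, -⟩
        · exact ⟨hc, hsol⟩
        · exact absurd hc hnB
      · rintro ⟨⟨hx, hy, hz⟩, hsol⟩
        exact ⟨coords_sing p x y z hx hy hz, hsol⟩
    rw [hconvA (K+1) (by omega), hconvA K (by omega)]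
    by_cases hA2 : ¬ (p:ℤ)^2 ∣ a
    · have hK2 : 2 ≤ K := by
        rcases Nat.lt_or_ge K 2 with h' | h'
        · exfalso; apply hb
          have : K = 1 := by omega
          rw [this, pow_one]; exact hA
        · exact h'
      rw [S_zero_p2 p hppos (K+1) (by omega) 0 0 a hA2,
        S_zero_p2 p hppos K (by omega) 0 0 a hA2, mul_zero]
    · push_neg at hA2
      obtain ⟨a', rfl⟩ := hA2
      have hK3 : 3 ≤ K := by
        rcases Nat.lt_or_ge K 3 with h' | h'
        · exfalso; apply hb
          calc (p:ℤ)^K ∣ (p:ℤ)^2 := pow_dvd_pow _ (by omega)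
            _ ∣ (p:ℤ)^2 * a' := ⟨a', rfl⟩
        · exact h'
      rw [S_rec p hppos (K+1) (by omega) 0 0 a', S_rec p hppos K (by omega) 0 0 a']
      have hb' : ¬ ((p:ℤ)^(K-2) ∣ a') := by
        intro hc'
        apply hb
        have : (p:ℤ)^K = (p:ℤ)^2 * (p:ℤ)^(K-2) := by rw [← pow_add]; congr 1; omega
        rw [this]
        exact mul_dvd_mul_left _ hc'
      have hIH := claimFe p hp hodd 0 (Or.inl rfl) (K-1) (by omega) 1 (by omega) a' (by
        have : K - 1 - 1 = K - 2 := by omega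
        rw [this]; exact hb')
      have e1 : K - 1 - 1 = K - 2 := by omega
      have e2 : K + 1 - 2 = K - 1 := by omega
      rw [e1] at hIH
      rw [e2, hIH]
      ring
  · by_cases hB : (p:ℤ) ∣ a - 4
    · -- branch B : p ∣ a - 4
      have hb : ¬ (p:ℤ)^K ∣ (a-4) := fun hc => h (Dvd.dvd.mul_left hc a)
      have hp4 := not_p_dvd_four p hp hodd
      -- the four sign patterns
      have hconvB : ∀ n : ℕ, 1 ≤ n →
          cntP p n (fun x y z => sing p (Ge₁ p 0 0) (Ge₂ p 0 0) (Ge₃ p 0 0) x y z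
            ∧ (p:ℤ)^n ∣ Fe p 0 0 a x y z)
          = 4 * cntP p n (fun X Y Z => ((p:ℤ) ∣ X ∧ (p:ℤ) ∣ Y ∧ (p:ℤ) ∣ Z)
            ∧ (p:ℤ)^n ∣ Fe p (-2) 0 (a-4) X Y Z) := by
        intro n hn
        have step1 : cntP p n (fun x y z => sing p (Ge₁ p 0 0) (Ge₂ p 0 0) (Ge₃ p 0 0) x y z
              ∧ (p:ℤ)^n ∣ Fe p 0 0 a x y z)
            = cntP p n (fun x y z =>
              (((p:ℤ) ∣ x-2 ∧ (p:ℤ) ∣ y-2 ∧ (p:ℤ) ∣ z-2)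
              ∨ (((p:ℤ) ∣ x-2 ∧ (p:ℤ) ∣ y+2 ∧ (p:ℤ) ∣ z+2)
              ∨ (((p:ℤ) ∣ x+2 ∧ (p:ℤ) ∣ y-2 ∧ (p:ℤ) ∣ z+2)
              ∨ ((p:ℤ) ∣ x+2 ∧ (p:ℤ) ∣ y+2 ∧ (p:ℤ) ∣ z-2))))
              ∧ (p:ℤ)^n ∣ Fe p 0 0 a x y z) := by
          apply cntP_congr
          intro x y z
          constructor
          · rintro ⟨hs, hsol⟩
            have hsolp : (p:ℤ) ∣ Fe p 0 0 a x y z :=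
              dvd_trans (dvd_pow_self _ (by omega)) hsol
            rcases MkSingClass p hp hodd a x y z hs hsolp with ⟨-, hc⟩ | ⟨-, hc⟩
            · exact absurd hc hA
            · exact ⟨by tauto, hsol⟩
          · rintro ⟨hpat, hsol⟩
            refine ⟨?_, hsol⟩
            rcases hpat with ⟨h1,h2,h3⟩ | ⟨h1,h2,h3⟩ | ⟨h1,h2,h3⟩ | ⟨h1,h2,h3⟩
            · exact pat_sing p x y z 2 2 2 h1 h2 h3 (by norm_num) (by norm_num) (by norm_num)
            · exact pat_sing p x y z 2 (-2) (-2) h1 (by simpa [sub_neg_eq_add] using h2)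
                (by simpa [sub_neg_eq_add] using h3) (by norm_num) (by norm_num) (by norm_num)
            · exact pat_sing p x y z (-2) 2 (-2) (by simpa [sub_neg_eq_add] using h1) h2
                (by simpa [sub_neg_eq_add] using h3) (by norm_num) (by norm_num) (by norm_num)
            · exact pat_sing p x y z (-2) (-2) 2 (by simpa [sub_neg_eq_add] using h1)
                (by simpa [sub_neg_eq_add] using h2) h3 (by norm_num) (by norm_num) (by norm_num)
        rw [step1]
        -- disjointness helper
        have hdisj : ∀ w : ℤ, (p:ℤ) ∣ w - 2 → (p:ℤ) ∣ w + 2 → False := by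
          intro w hw1 hw2
          apply hp4
          simpa using dvd_sub hw2 hw1
        rw [cntP_orSplit p n _ _ _ (fun x y z h1 h2 => by
          rcases h2 with ⟨a1,a2,a3⟩|⟨a1,a2,a3⟩|⟨a1,a2,a3⟩
          · exact hdisj y h1.2.1 a2
          · exact hdisj x h1.1 a1
          · exact hdisj x h1.1 a1)]
        rw [cntP_orSplit p n _ _ _ (fun x y z h1 h2 => by
          rcases h2 with ⟨a1,a2,a3⟩|⟨a1,a2,a3⟩
          · exact hdisj x h1.1 a1
          · exact hdisj x h1.1 a1)]
        rw [cntP_orSplit p n _ _ _ (fun x y z h1 h2 => by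
          exact hdisj y h1.2.1 h2.2.1)]
        -- convert each pattern count
        have c1 : cntP p n (fun x y z => ((p:ℤ) ∣ x-2 ∧ (p:ℤ) ∣ y-2 ∧ (p:ℤ) ∣ z-2)
              ∧ (p:ℤ)^n ∣ Fe p 0 0 a x y z)
            = cntP p n (fun X Y Z => ((p:ℤ) ∣ X ∧ (p:ℤ) ∣ Y ∧ (p:ℤ) ∣ Z)
              ∧ (p:ℤ)^n ∣ Fe p (-2) 0 (a-4) X Y Z) := by
          rw [← patcount p hp n hn a 1 1 1 (Or.inl rfl) (Or.inl rfl) (Or.inl rfl) (by norm_num)]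
          apply cntP_congr
          intro x y z
          constructor
          · rintro ⟨⟨h1,h2,h3⟩, h4⟩
            exact ⟨⟨by simpa using h1, by simpa using h2, by simpa using h3⟩, h4⟩
          · rintro ⟨⟨h1,h2,h3⟩, h4⟩
            exact ⟨⟨by simpa using h1, by simpa using h2, by simpa using h3⟩, h4⟩
        have c2 : cntP p n (fun x y z => ((p:ℤ) ∣ x-2 ∧ (p:ℤ) ∣ y+2 ∧ (p:ℤ) ∣ z+2)
              ∧ (p:ℤ)^n ∣ Fe p 0 0 a x y z)
            = cntP p n (fun X Y Z => ((p:ℤ) ∣ X ∧ (p:ℤ) ∣ Y ∧ (p:ℤ) ∣ Z)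
              ∧ (p:ℤ)^n ∣ Fe p (-2) 0 (a-4) X Y Z) := by
          rw [← patcount p hp n hn a 1 (-1) (-1) (Or.inl rfl) (Or.inr rfl) (Or.inr rfl)
            (by norm_num)]
          apply cntP_congr
          intro x y z
          constructor
          · rintro ⟨⟨h1,h2,h3⟩, h4⟩
            refine ⟨⟨by simpa using h1, ?_, ?_⟩, h4⟩
            · have e : y - 2*(-1) = y + 2 := by ring
              rw [e]; exact h2
            · have e : z - 2*(-1) = z + 2 := by ring
              rw [e]; exact h3
          · rintro ⟨⟨h1,h2,h3⟩, h4⟩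
            refine ⟨⟨by simpa using h1, ?_, ?_⟩, h4⟩
            · have e : y + 2 = y - 2*(-1) := by ring
              rw [e]; exact h2
            · have e : z + 2 = z - 2*(-1) := by ring
              rw [e]; exact h3
        have c3 : cntP p n (fun x y z => ((p:ℤ) ∣ x+2 ∧ (p:ℤ) ∣ y-2 ∧ (p:ℤ) ∣ z+2)
              ∧ (p:ℤ)^n ∣ Fe p 0 0 a x y z)
            = cntP p n (fun X Y Z => ((p:ℤ) ∣ X ∧ (p:ℤ) ∣ Y ∧ (p:ℤ) ∣ Z)
              ∧ (p:ℤ)^n ∣ Fe p (-2) 0 (a-4) X Y Z) := by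
          rw [← patcount p hp n hn a (-1) 1 (-1) (Or.inr rfl) (Or.inl rfl) (Or.inr rfl)
            (by norm_num)]
          apply cntP_congr
          intro x y z
          constructor
          · rintro ⟨⟨h1,h2,h3⟩, h4⟩
            refine ⟨⟨?_, by simpa using h2, ?_⟩, h4⟩
            · have e : x - 2*(-1) = x + 2 := by ring
              rw [e]; exact h1
            · have e : z - 2*(-1) = z + 2 := by ring
              rw [e]; exact h3
          · rintro ⟨⟨h1,h2,h3⟩, h4⟩
            refine ⟨⟨?_, by simpa using h2, ?_⟩, h4⟩
            · have e : x + 2 = x - 2*(-1) := by ring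
              rw [e]; exact h1
            · have e : z + 2 = z - 2*(-1) := by ring
              rw [e]; exact h3
        have c4 : cntP p n (fun x y z => ((p:ℤ) ∣ x+2 ∧ (p:ℤ) ∣ y+2 ∧ (p:ℤ) ∣ z-2)
              ∧ (p:ℤ)^n ∣ Fe p 0 0 a x y z)
            = cntP p n (fun X Y Z => ((p:ℤ) ∣ X ∧ (p:ℤ) ∣ Y ∧ (p:ℤ) ∣ Z)
              ∧ (p:ℤ)^n ∣ Fe p (-2) 0 (a-4) X Y Z) := by
          rw [← patcount p hp n hn a (-1) (-1) 1 (Or.inr rfl) (Or.inr rfl) (Or.inl rfl)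
            (by norm_num)]
          apply cntP_congr
          intro x y z
          constructor
          · rintro ⟨⟨h1,h2,h3⟩, h4⟩
            refine ⟨⟨?_, ?_, by simpa using h3⟩, h4⟩
            · have e : x - 2*(-1) = x + 2 := by ring
              rw [e]; exact h1
            · have e : y - 2*(-1) = y + 2 := by ring
              rw [e]; exact h2
          · rintro ⟨⟨h1,h2,h3⟩, h4⟩
            refine ⟨⟨?_, ?_, by simpa using h3⟩, h4⟩
            · have e : x + 2 = x - 2*(-1) := by ring
              rw [e]; exact h1
            · have e : y + 2 = y - 2*(-1) := by ring
              rw [e]; exact h2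
        rw [c1, c2, c3, c4]
        ring
      rw [hconvB (K+1) (by omega), hconvB K (by omega)]
      by_cases hB2 : ¬ (p:ℤ)^2 ∣ (a-4)
      · have hK2 : 2 ≤ K := by
          rcases Nat.lt_or_ge K 2 with h' | h'
          · exfalso; apply hb
            have : K = 1 := by omega
            rw [this, pow_one]; exact hB
          · exact h'
        rw [S_zero_p2 p hppos (K+1) (by omega) (-2) 0 (a-4) hB2,
          S_zero_p2 p hppos K (by omega) (-2) 0 (a-4) hB2]
        ring
      · push_neg at hB2
        obtain ⟨b', hbeq⟩ := hB2
        have hK3 : 3 ≤ K := by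
          rcases Nat.lt_or_ge K 3 with h' | h'
          · exfalso; apply hb
            calc (p:ℤ)^K ∣ (p:ℤ)^2 := pow_dvd_pow _ (by omega)
              _ ∣ (a-4) := hbeq ▸ ⟨b', rfl⟩
          · exact h'
        rw [hbeq]
        rw [S_rec p hppos (K+1) (by omega) (-2) 0 b', S_rec p hppos K (by omega) (-2) 0 b']
        have hb' : ¬ ((p:ℤ)^(K-2) ∣ b') := by
          intro hc'
          apply hb
          rw [hbeq]
          have : (p:ℤ)^K = (p:ℤ)^2 * (p:ℤ)^(K-2) := by rw [← pow_add]; congr 1; omega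
          rw [this]
          exact mul_dvd_mul_left _ hc'
        have hIH := claimFe p hp hodd (-2) (Or.inr rfl) (K-1) (by omega) 1 (by omega) b' (by
          have : K - 1 - 1 = K - 2 := by omega
          rw [this]; exact hb')
        have e1 : K - 1 - 1 = K - 2 := by omega
        have e2 : K + 1 - 2 = K - 1 := by omega
        rw [e1] at hIH
        rw [e2, hIH]
        ring
    · -- neither: no singular solutions at all
      have hzero : ∀ n : ℕ, 1 ≤ n →
          cntP p n (fun x y z => sing p (Ge₁ p 0 0) (Ge₂ p 0 0) (Ge₃ p 0 0) x y z
            ∧ (p:ℤ)^n ∣ Fe p 0 0 a x y z) = 0 := by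
        intro n hn
        apply cntP_zero
        rintro x y z ⟨hs, hsol⟩
        have hsolp : (p:ℤ) ∣ Fe p 0 0 a x y z :=
          dvd_trans (dvd_pow_self _ (by omega)) hsol
        rcases MkSingClass p hp hodd a x y z hs hsolp with ⟨-, hc⟩ | ⟨hc, -⟩
        · exact hA hc
        · exact hB hc
      rw [hzero (K+1) (by omega), hzero K (by omega), mul_zero]
lemma eC_pow (m : ℕ) (t : ℤ) (u : ℕ) : eC m ((u:ℤ) * t) = (eC m t)^u := by
  unfold eC
  rw [← Complex.exp_nat_mul]
  congr 1
  push_cast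
  ring

lemma eC_geom (m : ℕ) (hm : 1 ≤ m) (t : ℤ) :
    ∑ u ∈ Finset.Icc 1 m, eC m ((u:ℤ) * t) = if (m:ℤ) ∣ t then (m:ℂ) else 0 := by
  have hm0 : (m:ℂ) ≠ 0 := Nat.cast_ne_zero.mpr (by omega)
  set ζ : ℂ := eC m t with hζ
  have hsum : ∑ u ∈ Finset.Icc 1 m, eC m ((u:ℤ) * t) = ∑ u ∈ Finset.range m, ζ^(1+u) := by
    rw [← Finset.Ico_add_one_right_eq_Icc, Finset.sum_Ico_eq_sum_range]
    apply Finset.sum_congr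
    · simp
    · intro u _
      rw [eC_pow]
  have hζm : ζ^m = 1 := by
    rw [hζ]
    unfold eC
    rw [← Complex.exp_nat_mul]
    have harg : (m:ℂ) * (2 * Real.pi * Complex.I * (t:ℂ) / (m:ℂ)) = (t:ℂ) * (2 * Real.pi * Complex.I) := by
      field_simp
    rw [harg]
    exact_mod_cast Complex.exp_int_mul_two_pi_mul_I t
  by_cases hdvd : (m:ℤ) ∣ t
  · obtain ⟨s, rfl⟩ := hdvd
    have hζ1 : ζ = 1 := by
      rw [hζ]
      unfold eC
      have harg : 2 * Real.pi * Complex.I * ((m*s:ℤ):ℂ) / (m:ℂ) = (s:ℂ) * (2 * Real.pi * Complex.I) := by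
        push_cast
        field_simp
      rw [harg]
      exact_mod_cast Complex.exp_int_mul_two_pi_mul_I s
    rw [hsum, if_pos ⟨s, rfl⟩]
    simp [hζ1]
  · have hζ1 : ζ ≠ 1 := by
      intro hc
      apply hdvd
      rw [hζ] at hc
      unfold eC at hc
      rw [Complex.exp_eq_one_iff] at hc
      obtain ⟨n, hn⟩ := hc
      have h2pi : (2:ℂ) * Real.pi * Complex.I ≠ 0 := by
        have hπ : (Real.pi:ℂ) ≠ 0 := by exact_mod_cast Real.pi_ne_zero
        simp [hπ, Complex.I_ne_zero]
      have hn' : (2 * (Real.pi:ℂ) * Complex.I) * ((t:ℂ)/m)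
          = (2 * (Real.pi:ℂ) * Complex.I) * n := by
        linear_combination hn
      have ht : (t:ℂ)/m = n := mul_left_cancel₀ h2pi hn'
      rw [div_eq_iff hm0] at ht
      have : t = n * m := by exact_mod_cast ht
      exact ⟨n, by linarith⟩
    rw [hsum, if_neg hdvd]
    have : ∑ u ∈ Finset.range m, ζ^(1+u) = ζ * ∑ u ∈ Finset.range m, ζ^u := by
      rw [Finset.mul_sum]
      apply Finset.sum_congr rfl
      intro u _
      rw [pow_add, pow_one]
    rw [this, geom_sum_eq hζ1, hζm]
    simp
lemma eC_reduce (p : ℕ) (hp : 0 < p) (ℓ : ℕ) (hℓ : 1 ≤ ℓ) (v : ℕ) (t : ℤ) :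
    eC (p^ℓ) (((p*v : ℕ) : ℤ) * t) = eC (p^(ℓ-1)) ((v:ℤ) * t) := by
  unfold eC
  congr 1
  have hp0 : (p:ℂ) ≠ 0 := Nat.cast_ne_zero.mpr (by omega)
  have hpk : ((p:ℂ))^(ℓ-1) ≠ 0 := pow_ne_zero _ hp0
  have hl : ℓ = (ℓ-1) + 1 := by omega
  rw [hl]
  push_cast
  rw [pow_succ]
  field_simp

lemma coprime_sum (p : ℕ) (hp : p.Prime) (ℓ : ℕ) (hℓ : 1 ≤ ℓ) (t : ℤ) :
    ∑ u ∈ (Finset.Icc 1 (p^ℓ)).filter (fun u => Nat.Coprime u (p^ℓ)), eC (p^ℓ) ((u:ℤ) * t)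
    = (if ((p:ℤ))^ℓ ∣ t then ((p^ℓ : ℕ):ℂ) else 0)
      - (if ((p:ℤ))^(ℓ-1) ∣ t then ((p^(ℓ-1) : ℕ):ℂ) else 0) := by
  have hppos : 0 < p := hp.pos
  have hsplit := Finset.sum_filter_add_sum_filter_not (Finset.Icc 1 (p^ℓ))
    (fun u => Nat.Coprime u (p^ℓ)) (fun u => eC (p^ℓ) ((u:ℤ) * t))
  have hfull := eC_geom (p^ℓ) (Nat.one_le_pow _ _ hppos) t
  -- the non-coprime part
  have hiff : ∀ u : ℕ, ¬ Nat.Coprime u (p^ℓ) ↔ p ∣ u := by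
    intro u
    rw [Nat.coprime_pow_right_iff (by omega), Nat.coprime_comm]
    rw [Nat.Prime.coprime_iff_not_dvd hp]
    tauto
  have hfilter : (Finset.Icc 1 (p^ℓ)).filter (fun u => ¬ Nat.Coprime u (p^ℓ))
      = (Finset.Icc 1 (p^(ℓ-1))).map ⟨fun v => p*v, 
          mul_right_injective₀ (ne_of_gt hppos)⟩ := by
    ext u
    simp only [Finset.mem_filter, Finset.mem_Icc, Finset.mem_map, Function.Embedding.coeFn_mk]
    rw [hiff]
    have hpow : p^ℓ = p * p^(ℓ-1) := by
      rw [← pow_succ']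
      congr 1
      omega
    constructor
    · rintro ⟨⟨h1, h2⟩, v, rfl⟩
      have hv : v ≠ 0 := by rintro rfl; simp at h1
      refine ⟨v, ⟨by omega, ?_⟩, rfl⟩
      rw [hpow] at h2
      exact Nat.le_of_mul_le_mul_left h2 hppos
    · rintro ⟨v, ⟨h1, h2⟩, rfl⟩
      refine ⟨⟨Nat.mul_pos hppos (by omega), ?_⟩, ⟨v, rfl⟩⟩
      rw [hpow]
      exact Nat.mul_le_mul_left p h2
  have hnc : ∑ u ∈ (Finset.Icc 1 (p^ℓ)).filter (fun u => ¬ Nat.Coprime u (p^ℓ)),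
      eC (p^ℓ) ((u:ℤ) * t)
      = if ((p:ℤ))^(ℓ-1) ∣ t then ((p^(ℓ-1) : ℕ):ℂ) else 0 := by
    rw [hfilter, Finset.sum_map]
    simp only [Function.Embedding.coeFn_mk]
    have : ∀ v : ℕ, eC (p^ℓ) (((p*v : ℕ) : ℤ) * t) = eC (p^(ℓ-1)) ((v:ℤ) * t) :=
      fun v => eC_reduce p hppos ℓ hℓ v t
    rw [Finset.sum_congr rfl (fun v _ => this v)]
    rw [eC_geom (p^(ℓ-1)) (Nat.one_le_pow _ _ hppos) t]
    congr 1
  have hfull' : (∑ u ∈ (Finset.Icc 1 (p^ℓ)).filter (fun u => Nat.Coprime u (p^ℓ)),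
        eC (p^ℓ) ((u:ℤ) * t))
      + (if ((p:ℤ))^(ℓ-1) ∣ t then ((p^(ℓ-1) : ℕ):ℂ) else 0)
      = if ((p:ℤ))^ℓ ∣ t then ((p^ℓ : ℕ):ℂ) else 0 := by
    rw [← hnc, hsplit, hfull]
    congr 1
  linear_combination hfull'

lemma Icc_to_Ico_sum (m : ℤ) (hm : 1 ≤ m) (F : ℤ → ℂ) (hend : F m = F 0) :
    ∑ x ∈ Finset.Icc (1:ℤ) m, F x = ∑ x ∈ Finset.Ico (0:ℤ) m, F x := by
  have e1 : Finset.Icc (1:ℤ) m = insert m (Finset.Ico 1 m) := by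
    ext w
    simp only [Finset.mem_Icc, Finset.mem_insert, Finset.mem_Ico]
    omega
  have e2 : Finset.Ico (0:ℤ) m = insert 0 (Finset.Ico 1 m) := by
    ext w
    simp only [Finset.mem_insert, Finset.mem_Ico]
    omega
  rw [e1, e2, Finset.sum_insert (by simp), Finset.sum_insert (by simp), hend]

lemma Icc3_to_Ico3 (m : ℤ) (hm : 1 ≤ m) (F : ℤ → ℤ → ℤ → ℂ)
    (hx : ∀ y z, F m y z = F 0 y z) (hy : ∀ x z, F x m z = F x 0 z)
    (hz : ∀ x y, F x y m = F x y 0) :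
    ∑ x ∈ Finset.Icc (1:ℤ) m, ∑ y ∈ Finset.Icc (1:ℤ) m, ∑ z ∈ Finset.Icc (1:ℤ) m, F x y z
    = ∑ x ∈ Finset.Ico (0:ℤ) m, ∑ y ∈ Finset.Ico (0:ℤ) m, ∑ z ∈ Finset.Ico (0:ℤ) m, F x y z := by
  rw [Icc_to_Ico_sum m hm _ (by
    apply Finset.sum_congr rfl; intro y _
    apply Finset.sum_congr rfl; intro z _
    exact hx y z)]
  apply Finset.sum_congr rfl; intro x _
  rw [Icc_to_Ico_sum m hm _ (by
    apply Finset.sum_congr rfl; intro z _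
    exact hy x z)]
  apply Finset.sum_congr rfl; intro y _
  rw [Icc_to_Ico_sum m hm _ (hz x y)]
/-- Let `p` be an odd prime, `ℓ ≥ 2`, `a ∈ ℤ`. If `p^{ℓ-1} ∤ a(a-4)` then `T_a(p^ℓ) = 0`. -/
theorem stmt13 (p : ℕ) (hp : p.Prime) (hodd : p ≠ 2) (ℓ : ℕ) (hℓ : 2 ≤ ℓ) (a : ℤ)
    (h : ¬ (p : ℤ) ^ (ℓ - 1) ∣ a * (a - 4)) :
    T a (p ^ ℓ) = 0 := by
  classical
  have hppos : 0 < p := hp.pos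
  have hl1 : 1 ≤ ℓ := by omega
  have hFe : ∀ x y z : ℤ, Mk x y z - a = Fe p 0 0 a x y z := by
    intro x y z; unfold Mk Fe; push_cast; ring
  have hmZ : ((p^ℓ : ℕ) : ℤ) = (p:ℤ)^ℓ := by push_cast; rfl
  have hmpos : (1:ℤ) ≤ ((p^ℓ:ℕ):ℤ) := by
    have : 1 ≤ p^ℓ := Nat.one_le_pow _ _ hppos
    exact_mod_cast this
  -- the summand after performing the u-sum
  set F : ℤ → ℤ → ℤ → ℂ := fun x y z =>
    (if (p:ℤ)^ℓ ∣ Fe p 0 0 a x y z then ((p^ℓ:ℕ):ℂ) else 0)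
    - (if (p:ℤ)^(ℓ-1) ∣ Fe p 0 0 a x y z then ((p^(ℓ-1):ℕ):ℂ) else 0) with hFdef
  have hswap : T a (p^ℓ) = ∑ x ∈ Finset.Icc (1:ℤ) ((p^ℓ:ℕ):ℤ),
      ∑ y ∈ Finset.Icc (1:ℤ) ((p^ℓ:ℕ):ℤ), ∑ z ∈ Finset.Icc (1:ℤ) ((p^ℓ:ℕ):ℤ), F x y z := by
    unfold T
    rw [Finset.sum_comm]
    apply Finset.sum_congr rfl; intro x _
    rw [Finset.sum_comm]
    apply Finset.sum_congr rfl; intro y _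
    rw [Finset.sum_comm]
    apply Finset.sum_congr rfl; intro z _
    rw [coprime_sum p hp ℓ hl1 (Mk x y z - a), hFe x y z]
  -- congruence of the divisibility conditions
  have hcong : ∀ (j:ℕ), j ≤ ℓ → ∀ x x' y y' z z' : ℤ, (p:ℤ)^j ∣ x' - x →
      (p:ℤ)^j ∣ y' - y → (p:ℤ)^j ∣ z' - z →
      ((p:ℤ)^j ∣ Fe p 0 0 a x' y' z' ↔ (p:ℤ)^j ∣ Fe p 0 0 a x y z) := by
    intro j hj x x' y y' z z' hx hy hz
    have hdiff := Fe_mod_congr p 0 0 a ((p:ℤ)^j) x x' y y' z z' hx hy hz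
    constructor
    · intro h1
      have := dvd_sub h1 hdiff
      simpa using this
    · intro h1
      have := dvd_add hdiff h1
      simpa using this
  have hend : ∀ (j : ℕ), j ≤ ℓ → ∀ y z : ℤ,
      ((p:ℤ)^j ∣ ((p^ℓ:ℕ):ℤ) - 0) := by
    intro j hj y z
    rw [hmZ, sub_zero]
    exact pow_dvd_pow _ hj
  have hFend1 : ∀ y z : ℤ, F ((p^ℓ:ℕ):ℤ) y z = F 0 y z := by
    intro y z
    rw [hFdef]
    simp only
    rw [if_congr (hcong ℓ le_rfl 0 _ y y z z (hend ℓ le_rfl y z) (by simp) (by simp)) rfl rfl,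
      if_congr (hcong (ℓ-1) (by omega) 0 _ y y z z (hend (ℓ-1) (by omega) y z) (by simp)
        (by simp)) rfl rfl]
  have hFend2 : ∀ x z : ℤ, F x ((p^ℓ:ℕ):ℤ) z = F x 0 z := by
    intro x z
    rw [hFdef]
    simp only
    rw [if_congr (hcong ℓ le_rfl x x 0 _ z z (by simp) (hend ℓ le_rfl x z) (by simp)) rfl rfl,
      if_congr (hcong (ℓ-1) (by omega) x x 0 _ z z (by simp) (hend (ℓ-1) (by omega) x z)
        (by simp)) rfl rfl]
  have hFend3 : ∀ x y : ℤ, F x y ((p^ℓ:ℕ):ℤ) = F x y 0 := by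
    intro x y
    rw [hFdef]
    simp only
    rw [if_congr (hcong ℓ le_rfl x x y y 0 _ (by simp) (by simp) (hend ℓ le_rfl x y)) rfl rfl,
      if_congr (hcong (ℓ-1) (by omega) x x y y 0 _ (by simp) (by simp)
        (hend (ℓ-1) (by omega) x y)) rfl rfl]
  have hIco := Icc3_to_Ico3 ((p^ℓ:ℕ):ℤ) hmpos F hFend1 hFend2 hFend3
  -- split the difference
  have hsplit : ∑ x ∈ Finset.Ico (0:ℤ) ((p^ℓ:ℕ):ℤ), ∑ y ∈ Finset.Ico (0:ℤ) ((p^ℓ:ℕ):ℤ),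
      ∑ z ∈ Finset.Ico (0:ℤ) ((p^ℓ:ℕ):ℤ), F x y z
      = (∑ x ∈ Finset.Ico (0:ℤ) ((p:ℤ)^ℓ), ∑ y ∈ Finset.Ico (0:ℤ) ((p:ℤ)^ℓ),
          ∑ z ∈ Finset.Ico (0:ℤ) ((p:ℤ)^ℓ),
            (if (p:ℤ)^ℓ ∣ Fe p 0 0 a x y z then ((p^ℓ:ℕ):ℂ) else 0))
        - (∑ x ∈ Finset.Ico (0:ℤ) ((p:ℤ)^ℓ), ∑ y ∈ Finset.Ico (0:ℤ) ((p:ℤ)^ℓ),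
          ∑ z ∈ Finset.Ico (0:ℤ) ((p:ℤ)^ℓ),
            (if (p:ℤ)^(ℓ-1) ∣ Fe p 0 0 a x y z then ((p^(ℓ-1):ℕ):ℂ) else 0)) := by
    rw [hmZ, hFdef]
    simp only [Finset.sum_sub_distrib]
  -- identify the first sum
  have hA : (∑ x ∈ Finset.Ico (0:ℤ) ((p:ℤ)^ℓ), ∑ y ∈ Finset.Ico (0:ℤ) ((p:ℤ)^ℓ),
        ∑ z ∈ Finset.Ico (0:ℤ) ((p:ℤ)^ℓ),
          (if (p:ℤ)^ℓ ∣ Fe p 0 0 a x y z then ((p^ℓ:ℕ):ℂ) else 0))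
      = ((p^ℓ:ℕ):ℂ) * ((cntP p ℓ (fun x y z => (p:ℤ)^ℓ ∣ Fe p 0 0 a x y z) : ℕ) : ℂ) := by
    unfold cntP
    push_cast
    rw [Finset.mul_sum]
    apply Finset.sum_congr rfl; intro x _
    rw [Finset.mul_sum]
    apply Finset.sum_congr rfl; intro y _
    rw [Finset.mul_sum]
    apply Finset.sum_congr rfl; intro z _
    by_cases hc : (p:ℤ)^ℓ ∣ Fe p 0 0 a x y z <;> simp [hc]
  -- identify the second sum
  have hshift : ∀ x y z t u v : ℤ, ∃ E : ℤ,
      Fe p 0 0 a (x + (p:ℤ)^(ℓ-1)*t) (y + (p:ℤ)^(ℓ-1)*u) (z + (p:ℤ)^(ℓ-1)*v)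
        = Fe p 0 0 a x y z + (p:ℤ)^(ℓ-1)*E := by
    intro x y z t u v
    obtain ⟨E, hE⟩ := Fe_tay p 0 0 a x y z t u v ((p:ℤ)^(ℓ-1))
    exact ⟨(t * Ge₁ p 0 0 x y z + u * Ge₂ p 0 0 x y z + v * Ge₃ p 0 0 x y z)
      + (p:ℤ)^(ℓ-1) * E, by rw [hE]; ring⟩
  have hBcnt := cntP_collapse p hppos (ℓ-1) (Fe p 0 0 a) hshift
  have hexp : (ℓ-1)+1 = ℓ := by omega
  rw [hexp] at hBcnt
  have hB : (∑ x ∈ Finset.Ico (0:ℤ) ((p:ℤ)^ℓ), ∑ y ∈ Finset.Ico (0:ℤ) ((p:ℤ)^ℓ),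
        ∑ z ∈ Finset.Ico (0:ℤ) ((p:ℤ)^ℓ),
          (if (p:ℤ)^(ℓ-1) ∣ Fe p 0 0 a x y z then ((p^(ℓ-1):ℕ):ℂ) else 0))
      = ((p^(ℓ-1):ℕ):ℂ) * (((p^3 * cntP p (ℓ-1)
          (fun x y z => (p:ℤ)^(ℓ-1) ∣ Fe p 0 0 a x y z)) : ℕ) : ℂ) := by
    rw [← hBcnt]
    push_cast
    rw [Finset.mul_sum]
    apply Finset.sum_congr rfl; intro x _
    rw [Finset.mul_sum]
    apply Finset.sum_congr rfl; intro y _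
    rw [Finset.mul_sum]
    apply Finset.sum_congr rfl; intro z _
    by_cases hc : (p:ℤ)^(ℓ-1) ∣ Fe p 0 0 a x y z <;> simp [hc]
  -- the counting theorem
  have hcount := claimMk p hp hodd ℓ hℓ a h
  rw [hswap, hIco, hsplit, hA, hB, hcount]
  push_cast
  have hpow : (p:ℂ)^ℓ = (p:ℂ)^(ℓ-1) * (p:ℂ) := by
    rw [← pow_succ]
    congr 1
    omega
  rw [hpow]
  ring
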